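/- arXiv:1909.08122 — 2 statements merged into one kernel-verified Lean document; each statement's English description precedes it below -/
import Mathlib

section
/- Let n ≥ 2, let e₁ = (1,0,…,0) ∈ ℝⁿ and γ = (i, 1, 0, …, 0) ∈ ℂⁿ. There exist ε > 0 and C₁ > 0 such that for every a > 0 and every z ∈ ℂⁿ with |z − 2i a e₁| < 2εa, there exist ζ, η ∈ ℂⁿ with ζ·ζ = 0, η·η = 0, z = ζ + η, |ζ − aγ| < C₁ a ε, and |η + a γ̄| < C₁ a ε. -/
open MeasureTheory Metric Set Complex Filter

noncomputable section

/-- Euclidean space `ℝⁿ`. -/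
abbrev Euc (n : ℕ) := EuclideanSpace ℝ (Fin n)

variable {n : ℕ}

/-- The partial derivative `∂_{x_j} u (x)`. -/
def pd (u : Euc n → ℂ) (j : Fin n) (x : Euc n) : ℂ :=
  fderiv ℝ u x (EuclideanSpace.single j 1)

/-- The partial derivative within a set. -/
def pdW (s : Set (Euc n)) (u : Euc n → ℂ) (j : Fin n) (x : Euc n) : ℂ :=
  fderivWithin ℝ u s x (EuclideanSpace.single j 1)

/-- The Laplacian `Δu(x) = ∑_j ∂²u/∂x_j²`. -/
def lap (u : Euc n → ℂ) (x : Euc n) : ℂ := ∑ j : Fin n, pd (pd u j) j x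

/-- The Laplacian computed with derivatives within a set. -/
def lapW (s : Set (Euc n)) (u : Euc n → ℂ) (x : Euc n) : ℂ :=
  ∑ j : Fin n, pdW s (pdW s u j) j x

/-- `∇u·∇v = ∑_j ∂_j u ∂_j v` (bilinear scalar product of gradients). -/
def gradDot (u v : Euc n → ℂ) (x : Euc n) : ℂ := ∑ j : Fin n, pd u j x * pd v j x

/-- `∇u·∇v` with derivatives within a set. -/
def gradDotW (s : Set (Euc n)) (u v : Euc n → ℂ) (x : Euc n) : ℂ :=
  ∑ j : Fin n, pdW s u j x * pdW s v j x

/-- `u ∈ C^∞(cl Ω)` and `u` harmonic in `Ω`. -/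
def IsHarmonicOnCl (Ω : Set (Euc n)) (u : Euc n → ℂ) : Prop :=
  ContDiffOn ℝ (⊤ : ℕ∞) u (closure Ω) ∧ ∀ x ∈ Ω, lap u x = 0

/-- `Ω` has `C^∞` boundary: near each boundary point there is a smooth defining
function with nonvanishing differential. -/
def HasSmoothBoundary (Ω : Set (Euc n)) : Prop :=
  ∀ x ∈ frontier Ω, ∃ (U : Set (Euc n)) (ρ : Euc n → ℝ), IsOpen U ∧ x ∈ U ∧
    ContDiff ℝ (⊤ : ℕ∞) ρ ∧ (∀ y ∈ U, fderiv ℝ ρ y ≠ 0) ∧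
    Ω ∩ U = {y ∈ U | ρ y < 0} ∧ frontier Ω ∩ U = {y ∈ U | ρ y = 0}

/-- `Γ` is a relatively open subset of the set `F` (e.g. of the boundary `∂Ω`). -/
def RelOpenIn (Γ F : Set (Euc n)) : Prop := Γ ⊆ F ∧ ∃ O : Set (Euc n), IsOpen O ∧ Γ = O ∩ F

/-- `U ⊆ Γ` has `C^∞` boundary as a subset of the hypersurface `Γ`: near each point of the
relative boundary of `U` in `Γ` there is a smooth defining function with nonvanishing
differential cutting `U` out of `Γ`. -/
def HasSmoothRelBoundary (Γ U : Set (Euc n)) : Prop :=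
  ∀ x ∈ Γ ∩ closure U ∩ closure (Γ \ U), ∃ (W : Set (Euc n)) (ρ : Euc n → ℝ),
    IsOpen W ∧ x ∈ W ∧ ContDiff ℝ (⊤ : ℕ∞) ρ ∧ (∀ y ∈ W, fderiv ℝ ρ y ≠ 0) ∧
    U ∩ W = {y ∈ Γ ∩ W | ρ y < 0}

/-- Sup norm over a set. -/
def supNorm (s : Set (Euc n)) (u : Euc n → ℂ) : ℝ := sSup ((fun x => ‖u x‖) '' s)

/-- Hölder seminorm of exponent `α` over a set. -/
def holderSemi (α : ℝ) (s : Set (Euc n)) (u : Euc n → ℂ) : ℝ :=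
  sSup ({0} ∪ (fun p : Euc n × Euc n => ‖u p.1 - u p.2‖ / dist p.1 p.2 ^ α) ''
    {p : Euc n × Euc n | p.1 ∈ s ∧ p.2 ∈ s ∧ p.1 ≠ p.2})

/-- The `C^α` (Hölder) norm on a set. -/
def cαNorm (α : ℝ) (s : Set (Euc n)) (u : Euc n → ℂ) : ℝ := holderSemi α s u + supNorm s u

/-- Membership in the Hölder space `C^α(s)`. -/
def MemHolderOn (α : ℝ) (s : Set (Euc n)) (u : Euc n → ℂ) : Prop :=
  ContinuousOn u s ∧ ∃ L : ℝ, ∀ x ∈ s, ∀ y ∈ s, ‖u x - u y‖ ≤ L * dist x y ^ α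

/-- The `C^{2,α}` norm on a set: Hölder seminorms of the second derivatives plus sup norm. -/
def c2αNorm (α : ℝ) (s : Set (Euc n)) (u : Euc n → ℂ) : ℝ :=
  (∑ j : Fin n, ∑ k : Fin n, holderSemi α s (pdW s (pdW s u j) k)) + supNorm s u

/-- Membership in `C^{2,α}(s)`. -/
def MemC2Holder (α : ℝ) (s : Set (Euc n)) (u : Euc n → ℂ) : Prop :=
  ContDiffOn ℝ 2 u s ∧ ∃ L : ℝ, ∀ j k : Fin n, ∀ x ∈ s, ∀ y ∈ s,
    ‖pdW s (pdW s u j) k x - pdW s (pdW s u j) k y‖ ≤ L * dist x y ^ α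

/-- `f ∈ C^{2,α}(∂Ω)`: `f` is the boundary restriction of a `C^{2,α}(cl Ω)` function. -/
def MemC2HolderBdry (α : ℝ) (Ω : Set (Euc n)) (f : Euc n → ℂ) : Prop :=
  ∃ F : Euc n → ℂ, MemC2Holder α (closure Ω) F ∧ ∀ x ∈ frontier Ω, F x = f x

/-- The `C^{2,α}(∂Ω)` norm, as the infimum of the `C^{2,α}(cl Ω)` norms of all extensions. -/
def c2αBdryNorm (α : ℝ) (Ω : Set (Euc n)) (f : Euc n → ℂ) : ℝ :=
  sInf {c : ℝ | ∃ F : Euc n → ℂ, MemC2Holder α (closure Ω) F ∧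
    (∀ x ∈ frontier Ω, F x = f x) ∧ c = c2αNorm α (closure Ω) F}

/-- The `L²(Ω)` norm. -/
def L2norm (Ω : Set (Euc n)) (u : Euc n → ℂ) : ℝ := Real.sqrt (∫ x in Ω, ‖u x‖ ^ 2)

/-- The `L²(Ω)` norm of the gradient. -/
def L2gradNorm (Ω : Set (Euc n)) (u : Euc n → ℂ) : ℝ :=
  Real.sqrt (∫ x in Ω, ∑ j : Fin n, ‖pd u j x‖ ^ 2)

/-- The `L^∞(Ω)` norm. -/
def LinfNorm (Ω : Set (Euc n)) (f : Euc n → ℂ) : ℝ :=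
  (eLpNorm f ⊤ (volume.restrict Ω)).toReal

/-- Hermitian norm on `ℂⁿ`. -/
def hnormC (ζ : Fin n → ℂ) : ℝ := Real.sqrt (∑ j : Fin n, ‖ζ j‖ ^ 2)

/-- `|Im ζ'|`: the norm of the imaginary part of `(ζ₂,…,ζ_n)`. -/
def imTail (ζ : Fin n → ℂ) : ℝ :=
  Real.sqrt (∑ j : Fin n, if (j : ℕ) = 0 then 0 else (ζ j).im ^ 2)

/-- `x·ζ = ∑_j x_j ζ_j` for `x ∈ ℝⁿ`, `ζ ∈ ℂⁿ`. -/
def dotRC (x : Euc n) (ζ : Fin n → ℂ) : ℂ := ∑ j : Fin n, (x j : ℂ) * ζ j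

/-- The first coordinate vector `e₁ = (1,0,…,0) ∈ ℝⁿ`. -/
def e1 (n : ℕ) : Euc n :=
  (WithLp.equiv 2 (Fin n → ℝ)).symm (fun j => if (j : ℕ) = 0 then 1 else 0)

/-- `γ = (i,1,0,…,0) ∈ ℂⁿ`. -/
def gamC (n : ℕ) : Fin n → ℂ :=
  fun j => if (j : ℕ) = 0 then Complex.I else if (j : ℕ) = 1 then 1 else 0


lemma hnormC_mul {n : ℕ} (c : ℂ) (u : Fin n → ℂ) :
    hnormC (fun j => c * u j) = ‖c‖ * hnormC u := by
  unfold hnormC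
  rw [← Real.sqrt_sq (norm_nonneg c), ← Real.sqrt_mul (sq_nonneg _), Finset.mul_sum]
  simp [map_mul, mul_pow]

lemma hnormC_nonneg {n : ℕ} (u : Fin n → ℂ) : 0 ≤ hnormC u := Real.sqrt_nonneg _

lemma dist_le_hnormC {n : ℕ} (z w : Fin n → ℂ) : dist z w ≤ hnormC (fun j => z j - w j) := by
  rw [dist_pi_le_iff (hnormC_nonneg _)]
  intro i
  rw [Complex.dist_eq]
  have h1 : ‖z i - w i‖ = Real.sqrt (‖z i - w i‖ ^ 2) :=
    (Real.sqrt_sq (norm_nonneg _)).symm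
  rw [h1]
  apply Real.sqrt_le_sqrt
  exact Finset.single_le_sum (f := fun j => ‖z j - w j‖ ^ 2)
    (fun j _ => sq_nonneg _) (Finset.mem_univ i)

lemma sum_pair_support {n : ℕ} (i0 i1 : Fin n) (hne : i0 ≠ i1) (g : Fin n → ℂ)
    (h : ∀ j, j ≠ i0 → j ≠ i1 → g j = 0) : (∑ j, g j) = g i0 + g i1 := by
  rw [← Finset.sum_subset (Finset.subset_univ ({i0, i1} : Finset (Fin n)))
    (fun x _ hx => by
      simp only [Finset.mem_insert, Finset.mem_singleton, not_or] at hx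
      exact h x hx.1 hx.2)]
  exact Finset.sum_pair hne

lemma hnormC_continuous {n : ℕ} : Continuous (hnormC (n := n)) := by
  unfold hnormC
  exact (continuous_finset_sum _ fun j _ =>
    (continuous_norm.comp (continuous_apply j)).pow 2).sqrt

/-- the multiplier λ(z) -/
def lamF {n : ℕ} (i0 i1 : Fin n) (z : Fin n → ℂ) : ℂ :=
  Complex.I / 2 * (((∑ j, z j ^ 2) / (z i0 ^ 2 + z i1 ^ 2)) ^ ((1 : ℂ) / 2))

def vF {n : ℕ} (i0 i1 : Fin n) (z : Fin n → ℂ) : Fin n → ℂ :=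
  fun j => if j = i0 then z i1 else if j = i1 then -(z i0) else 0

def zetaF {n : ℕ} (i0 i1 : Fin n) (z : Fin n → ℂ) : Fin n → ℂ :=
  fun j => z j / 2 + lamF i0 i1 z * vF i0 i1 z j

def etaF {n : ℕ} (i0 i1 : Fin n) (z : Fin n → ℂ) : Fin n → ℂ :=
  fun j => z j / 2 - lamF i0 i1 z * vF i0 i1 z j

lemma zetaF_sq {n : ℕ} (i0 i1 : Fin n) (hne : i0 ≠ i1) (z : Fin n → ℂ)
    (hd : z i0 ^ 2 + z i1 ^ 2 ≠ 0) (hs : (∑ j, z j ^ 2) ≠ 0) :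
    (∑ j, zetaF i0 i1 z j ^ 2) = 0 ∧ (∑ j, etaF i0 i1 z j ^ 2) = 0 := by
  set lam := lamF i0 i1 z with hlam
  set v := vF i0 i1 z with hv
  set s := (∑ j, z j ^ 2) with hsdef
  set d := z i0 ^ 2 + z i1 ^ 2 with hddef
  have hr : s / d ≠ 0 := div_ne_zero hs hd
  have hsq : ((s / d) ^ ((1:ℂ)/2)) * ((s / d) ^ ((1:ℂ)/2)) = s / d := by
    rw [← Complex.cpow_add _ _ hr]
    norm_num
  have hlam2 : lam ^ 2 = -(s / d) / 4 := by
    rw [hlam]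
    unfold lamF
    rw [← hsdef, ← hddef]
    have : (Complex.I / 2 * (s / d) ^ ((1:ℂ)/2)) ^ 2
        = Complex.I * Complex.I / 4 * (((s/d) ^ ((1:ℂ)/2)) * ((s/d) ^ ((1:ℂ)/2))) := by ring
    rw [this, hsq, Complex.I_mul_I]
    ring
  have hvsum : (∑ j, z j * v j) = 0 := by
    rw [sum_pair_support i0 i1 hne _ (fun j h0 h1 => by simp [hv, vF, h0, h1])]
    simp [hv, vF, if_neg hne.symm]
    ring
  have hv2 : (∑ j, v j ^ 2) = d := by
    rw [sum_pair_support i0 i1 hne _ (fun j h0 h1 => by simp [hv, vF, h0, h1])]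
    simp [hv, vF, if_neg hne.symm]
    ring
  have key : ∀ (c : ℂ), c = 1 ∨ c = -1 →
      (∑ j, (z j / 2 + c * (lam * v j)) ^ 2) = 0 := by
    intro c hc
    have expand : ∀ j, (z j / 2 + c * (lam * v j)) ^ 2
        = z j ^ 2 / 4 + (c * lam) * (z j * v j) + (c^2 * lam ^ 2) * v j ^ 2 := by
      intro j; ring
    rw [Finset.sum_congr rfl (fun j _ => expand j)]
    rw [Finset.sum_add_distrib, Finset.sum_add_distrib, ← Finset.mul_sum, ← Finset.mul_sum]
    have hc2 : c ^ 2 = 1 := by rcases hc with h | h <;> simp [h] <;> ring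
    rw [hvsum, hv2, hc2, hlam2]
    have : (∑ j, z j ^ 2 / 4) = s / 4 := by rw [← Finset.sum_div, ← hsdef]
    rw [this]
    field_simp
    ring
  constructor
  · have := key 1 (Or.inl rfl)
    simpa [zetaF, ← hlam, ← hv] using this
  · have := key (-1) (Or.inr rfl)
    simp only [etaF, ← hlam, ← hv]
    have e : ∀ j, z j / 2 - lam * v j = z j / 2 + (-1 : ℂ) * (lam * v j) := by intro j; ring
    rw [Finset.sum_congr rfl (fun j _ => by rw [e j])]
    exact this

lemma keyLemma (n : ℕ) (hn : 2 ≤ n) : ∃ δ > 0, ∀ z : Fin n → ℂ,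
    dist z (fun j : Fin n => if (j : ℕ) = 0 then (2 * Complex.I : ℂ) else 0) < δ →
    ∃ ζ η : Fin n → ℂ, (∑ j, ζ j ^ 2) = 0 ∧ (∑ j, η j ^ 2) = 0 ∧ (∀ j, z j = ζ j + η j) ∧
      hnormC (fun j => ζ j - gamC n j) < 1 ∧
      hnormC (fun j => η j + (starRingEnd ℂ) (gamC n j)) < 1 := by
  set i0 : Fin n := ⟨0, by omega⟩ with hi0
  set i1 : Fin n := ⟨1, by omega⟩ with hi1
  have hne : i0 ≠ i1 := by simp [hi0, hi1, Fin.ext_iff]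
  set z₀ : Fin n → ℂ := fun j => if (j : ℕ) = 0 then (2 * Complex.I : ℂ) else 0 with hz₀
  have hz00 : z₀ i0 = 2 * Complex.I := by simp [hz₀, hi0]
  have hz01 : z₀ i1 = 0 := by simp [hz₀, hi1]
  have hz0j : ∀ j, j ≠ i0 → z₀ j = 0 := by
    intro j hj
    have : (j : ℕ) ≠ 0 := fun h => hj (Fin.ext (by simp [hi0, h]))
    simp [hz₀, this]
  -- values at z₀
  have hd0 : z₀ i0 ^ 2 + z₀ i1 ^ 2 = -4 := by
    rw [hz00, hz01]; simp [mul_pow, Complex.I_sq]; ring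
  have hs0 : (∑ j, z₀ j ^ 2) = -4 := by
    rw [sum_pair_support i0 i1 hne _ (fun j h0 _ => by rw [hz0j j h0]; ring)]
    rw [hz00, hz01]; simp [mul_pow, Complex.I_sq]; ring
  have hlam0 : lamF i0 i1 z₀ = Complex.I / 2 := by
    unfold lamF
    rw [hd0, hs0]
    norm_num
  have hzeta0 : ∀ j, zetaF i0 i1 z₀ j = gamC n j := by
    intro j
    unfold zetaF vF
    rw [hlam0]
    rcases eq_or_ne j i0 with h | h0
    · subst h; rw [if_pos rfl, hz00, hz01]
      simp [gamC, hi0]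
    rcases eq_or_ne j i1 with h | h1
    · rw [h, if_neg hne.symm, if_pos rfl, hz01, hz00]
      have h1 : ((i1 : Fin n) : ℕ) = 1 := by simp [hi1]
      simp only [gamC, h1]
      norm_num
      linear_combination (-1 : ℂ) * Complex.I_sq
    · rw [if_neg h0, if_neg h1, hz0j j h0]
      have e0 : (j : ℕ) ≠ 0 := fun h => h0 (Fin.ext (by simp [hi0, h]))
      have e1 : (j : ℕ) ≠ 1 := fun h => h1 (Fin.ext (by simp [hi1, h]))
      simp [gamC, e0, e1]
  have heta0 : ∀ j, etaF i0 i1 z₀ j = -(starRingEnd ℂ) (gamC n j) := by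
    intro j
    unfold etaF vF
    rw [hlam0]
    rcases eq_or_ne j i0 with h | h0
    · subst h; rw [if_pos rfl, hz00, hz01]
      simp [gamC, hi0]
    rcases eq_or_ne j i1 with h | h1
    · rw [h, if_neg hne.symm, if_pos rfl, hz01, hz00]
      have h1 : ((i1 : Fin n) : ℕ) = 1 := by simp [hi1]
      simp only [gamC, h1]
      norm_num
      linear_combination Complex.I_sq
    · rw [if_neg h0, if_neg h1, hz0j j h0]
      have e0 : (j : ℕ) ≠ 0 := fun h => h0 (Fin.ext (by simp [hi0, h]))
      have e1 : (j : ℕ) ≠ 1 := fun h => h1 (Fin.ext (by simp [hi1, h]))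
      simp [gamC, e0, e1]
  -- continuity at z₀
  have hconts : ContinuousAt (fun z : Fin n → ℂ => ∑ j, z j ^ 2) z₀ :=
    (continuous_finset_sum _ fun j _ => (continuous_apply j).pow 2).continuousAt
  have hcontd : ContinuousAt (fun z : Fin n → ℂ => z i0 ^ 2 + z i1 ^ 2) z₀ :=
    (((continuous_apply i0).pow 2).add ((continuous_apply i1).pow 2)).continuousAt
  have hratio : ContinuousAt
      (fun z : Fin n → ℂ => (∑ j, z j ^ 2) / (z i0 ^ 2 + z i1 ^ 2)) z₀ :=
    hconts.div hcontd (by rw [hd0]; norm_num)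
  have hratio0 : ((∑ j, z₀ j ^ 2) / (z₀ i0 ^ 2 + z₀ i1 ^ 2)) = 1 := by
    rw [hs0, hd0]; norm_num
  have hfs : Tendsto (fun z : Fin n → ℂ => ∑ j, z j ^ 2) (nhds z₀) (nhds (-4)) := by
    rw [← hs0]; exact hconts
  have hfd : Tendsto (fun z : Fin n → ℂ => z i0 ^ 2 + z i1 ^ 2) (nhds z₀) (nhds (-4)) := by
    rw [← hd0]; exact hcontd
  have hfr : Tendsto (fun z : Fin n → ℂ => (∑ j, z j ^ 2) / (z i0 ^ 2 + z i1 ^ 2))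
      (nhds z₀) (nhds 1) := by
    have := hfs.div hfd (by norm_num)
    rwa [show ((-4 : ℂ)) / (-4 : ℂ) = 1 by norm_num] at this
  have htend := hfr.cpow (tendsto_const_nhds (x := (1 : ℂ) / 2))
    Complex.one_mem_slitPlane
  have hlamc : ContinuousAt (lamF i0 i1) z₀ := by
    unfold ContinuousAt
    rw [hlam0]
    have h2 : Tendsto (fun z : Fin n → ℂ =>
        Complex.I / 2 * (((∑ j, z j ^ 2) / (z i0 ^ 2 + z i1 ^ 2)) ^ ((1 : ℂ) / 2)))
        (nhds z₀) (nhds (Complex.I / 2 * (1 : ℂ) ^ ((1 : ℂ) / 2))) :=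
      tendsto_const_nhds.mul htend
    rw [Complex.one_cpow, mul_one] at h2
    exact h2
  have hvc : ∀ j, ContinuousAt (fun z : Fin n → ℂ => vF i0 i1 z j) z₀ := by
    intro j
    unfold vF
    rcases eq_or_ne j i0 with h | h0
    · simp only [h, if_pos rfl]
      exact (continuous_apply i1).continuousAt
    rcases eq_or_ne j i1 with h | h1
    · simp only [if_neg h0, h, if_pos rfl]
      exact ((continuous_apply i0).neg).continuousAt
    · simp only [if_neg h0, if_neg h1]
      exact continuousAt_const
  have hzc : ∀ j, ContinuousAt (fun z => zetaF i0 i1 z j) z₀ := fun j => by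
    unfold zetaF
    exact ((continuous_apply j).continuousAt.div_const 2).add (hlamc.mul (hvc j))
  have hec : ∀ j, ContinuousAt (fun z => etaF i0 i1 z j) z₀ := fun j => by
    unfold etaF
    exact ((continuous_apply j).continuousAt.div_const 2).sub (hlamc.mul (hvc j))
  have hF : ContinuousAt
      (fun z => hnormC (fun j => zetaF i0 i1 z j - gamC n j)) z₀ :=
    hnormC_continuous.continuousAt.comp
      (continuousAt_pi.mpr fun j => (hzc j).sub continuousAt_const)
  have hG : ContinuousAt
      (fun z => hnormC (fun j => etaF i0 i1 z j + (starRingEnd ℂ) (gamC n j))) z₀ :=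
    hnormC_continuous.continuousAt.comp
      (continuousAt_pi.mpr fun j => (hec j).add continuousAt_const)
  have hF0 : hnormC (fun j => zetaF i0 i1 z₀ j - gamC n j) < 1 := by
    have : (fun j => zetaF i0 i1 z₀ j - gamC n j) = fun _ => (0 : ℂ) :=
      funext fun j => by rw [hzeta0 j]; ring
    rw [this]
    simp [hnormC]
  have hG0 : hnormC (fun j => etaF i0 i1 z₀ j + (starRingEnd ℂ) (gamC n j)) < 1 := by
    have : (fun j => etaF i0 i1 z₀ j + (starRingEnd ℂ) (gamC n j)) = fun _ => (0 : ℂ) :=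
      funext fun j => by rw [heta0 j]; ring
    rw [this]
    simp [hnormC]
  have ev1 : ∀ᶠ z in nhds z₀,
      hnormC (fun j => zetaF i0 i1 z j - gamC n j) < 1 := hF (Iio_mem_nhds hF0)
  have ev2 : ∀ᶠ z in nhds z₀,
      hnormC (fun j => etaF i0 i1 z j + (starRingEnd ℂ) (gamC n j)) < 1 := hG (Iio_mem_nhds hG0)
  have ev3 : ∀ᶠ z in nhds z₀, z i0 ^ 2 + z i1 ^ 2 ≠ 0 :=
    hcontd.eventually_ne (by rw [hd0]; norm_num)
  have ev4 : ∀ᶠ z in nhds z₀, (∑ j, z j ^ 2) ≠ (0 : ℂ) :=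
    hconts.eventually_ne (by rw [hs0]; norm_num)
  obtain ⟨δ, hδ, hball⟩ := Metric.eventually_nhds_iff.mp (((ev1.and ev2).and (ev3.and ev4)))
  refine ⟨δ, hδ, fun z hz => ?_⟩
  obtain ⟨⟨h1, h2⟩, h3, h4⟩ := hball hz
  obtain ⟨hzsq, hesq⟩ := zetaF_sq i0 i1 hne z h3 h4
  exact ⟨zetaF i0 i1 z, etaF i0 i1 z, hzsq, hesq,
    fun j => by unfold zetaF etaF; ring, h1, h2⟩


theorem stmt6 (n : ℕ) (hn : 2 ≤ n) :
    ∃ ε > 0, ∃ C₁ > 0, ∀ a : ℝ, 0 < a → ∀ z : Fin n → ℂ,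
      hnormC (fun j => z j - (if (j : ℕ) = 0 then 2 * Complex.I * a else 0)) < 2 * ε * a →
      ∃ ζ η : Fin n → ℂ, (∑ j : Fin n, ζ j ^ 2) = 0 ∧ (∑ j : Fin n, η j ^ 2) = 0 ∧
        (∀ j, z j = ζ j + η j) ∧
        hnormC (fun j => ζ j - a * gamC n j) < C₁ * a * ε ∧
        hnormC (fun j => η j + a * (starRingEnd ℂ) (gamC n j)) < C₁ * a * ε := by
  obtain ⟨δ, hδ, hkey⟩ := keyLemma n hn
  refine ⟨δ / 2, by positivity, 2 / δ, by positivity, fun a ha z hz => ?_⟩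
  have ha' : (a : ℂ) ≠ 0 := by
    exact_mod_cast ne_of_gt ha
  set w : Fin n → ℂ := fun j => z j / a with hw
  have heq : (fun j => w j - (if (j : ℕ) = 0 then (2 * Complex.I : ℂ) else 0))
      = fun j => (1 / (a : ℂ)) * (z j - (if (j : ℕ) = 0 then 2 * Complex.I * a else 0)) := by
    funext j
    by_cases h : (j : ℕ) = 0 <;> simp only [hw, h, if_true, if_false] <;> field_simp <;> ring
  have hdist : dist w (fun j : Fin n => if (j : ℕ) = 0 then (2 * Complex.I : ℂ) else 0) < δ := by
    refine lt_of_le_of_lt (dist_le_hnormC _ _) ?_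
    rw [heq, hnormC_mul]
    have habs : ‖(1 / (a : ℂ))‖ = 1 / a := by
      rw [norm_div, Complex.norm_real, Real.norm_eq_abs, norm_one, abs_of_pos ha]
    rw [habs]
    have h2 : 2 * (δ / 2) * a = δ * a := by ring
    rw [h2] at hz
    rw [div_mul_eq_mul_div, one_mul, div_lt_iff₀ ha]
    linarith [hz]
  obtain ⟨ζ', η', hz1, hz2, hsum, hb1, hb2⟩ := hkey w hdist
  have hCa : 2 / δ * a * (δ / 2) = a := by field_simp
  refine ⟨fun j => a * ζ' j, fun j => a * η' j, ?_, ?_, ?_, ?_, ?_⟩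
  · have : (∑ j, ((a : ℂ) * ζ' j) ^ 2) = (a : ℂ) ^ 2 * ∑ j, ζ' j ^ 2 := by
      rw [Finset.mul_sum]; exact Finset.sum_congr rfl fun j _ => by ring
    rw [this, hz1, mul_zero]
  · have : (∑ j, ((a : ℂ) * η' j) ^ 2) = (a : ℂ) ^ 2 * ∑ j, η' j ^ 2 := by
      rw [Finset.mul_sum]; exact Finset.sum_congr rfl fun j _ => by ring
    rw [this, hz2, mul_zero]
  · intro j
    have h1 : z j = a * w j := by
      rw [hw]; field_simp
    rw [h1, hsum j]; ring
  · have he : (fun j => (a : ℂ) * ζ' j - (a : ℂ) * gamC n j)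
        = fun j => (a : ℂ) * (ζ' j - gamC n j) := funext fun j => by ring
    rw [hCa, he, hnormC_mul, Complex.norm_real, Real.norm_eq_abs, abs_of_pos ha]
    calc a * hnormC (fun j => ζ' j - gamC n j) < a * 1 :=
      mul_lt_mul_of_pos_left hb1 ha
    _ = a := mul_one a
  · have he : (fun j => (a : ℂ) * η' j + (a : ℂ) * (starRingEnd ℂ) (gamC n j))
        = fun j => (a : ℂ) * (η' j + (starRingEnd ℂ) (gamC n j)) := funext fun j => by ring
    rw [hCa, he, hnormC_mul, Complex.norm_real, Real.norm_eq_abs, abs_of_pos ha]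
    calc a * hnormC (fun j => η' j + (starRingEnd ℂ) (gamC n j)) < a * 1 :=
      mul_lt_mul_of_pos_left hb2 ha
    _ = a := mul_one a
end
end

section
/- Let Ω ⊂ ℝⁿ, n ≥ 2, be a bounded open set with C^∞ boundary, 0 < α < 1, q ∈ C^α(cl Ω), and let V: cl Ω × ℂ → ℂ be such that z ↦ V(·,z) is holomorphic from ℂ into C^α(cl Ω) and V(x,0) = 0 for all x ∈ cl Ω. Then the map F: C^{2,α}(∂Ω) × C^{2,α}(cl Ω) → C^α(cl Ω) × C^{2,α}(∂Ω) defined by F(f,u) = (−Δu + q (∇u)² + V(·,u), u|_{∂Ω} − f) is holomorphic (i.e. analytic as a map between complex Banach spaces). -/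
open MeasureTheory Metric Set Complex Filter

noncomputable section

variable {n : ℕ}

section AuxA
open Metric Set Complex Filter MeasureTheory
open Topology Metric Set Complex Filter MeasureTheory

variable {n : ℕ} {Ω : Set (Euc n)}

theorem halfspace_sub_tangentCone (hΩo : IsOpen Ω) {U : Set (Euc n)} {ρ : Euc n → ℝ}
    (hUo : IsOpen U) (hρsm : ContDiff ℝ (⊤ : ℕ∞) ρ)
    (hΩU : Ω ∩ U = {y ∈ U | ρ y < 0}) {x : Euc n} (hxU : x ∈ U) (hρx : ρ x = 0)
    {ξ : Euc n} (hξ : fderiv ℝ ρ x ξ < 0) : ξ ∈ tangentConeAt ℝ (closure Ω) x := by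
  have hder : HasDerivAt (fun t : ℝ => ρ (x + t • ξ)) (fderiv ℝ ρ x ξ) 0 := by
    have h1 : HasDerivAt (fun t : ℝ => x + t • ξ) ξ 0 := by
      simpa using ((hasDerivAt_id (0:ℝ)).smul_const ξ).const_add x
    have h2 : HasFDerivAt ρ (fderiv ℝ ρ x) (x + (0:ℝ) • ξ) := by
      simpa using (hρsm.differentiable (by simp) x).hasFDerivAt
    exact h2.comp_hasDerivAt 0 h1
  have hev : ∀ᶠ t in 𝓝[>] (0:ℝ), x + t • ξ ∈ Ω := by
    have hslope := hder.hasDerivWithinAt (s := Set.Ioi (0:ℝ))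
    rw [hasDerivWithinAt_iff_tendsto_slope] at hslope
    have hsub : 𝓝[Set.Ioi (0:ℝ) \ {0}] (0:ℝ) = 𝓝[>] (0:ℝ) := by
      congr 1
      rw [Set.diff_singleton_eq_self (by simp)]
    rw [hsub] at hslope
    have hneg : ∀ᶠ t in 𝓝[>] (0:ℝ), slope (fun t : ℝ => ρ (x + t • ξ)) 0 t < 0 :=
      hslope (Iio_mem_nhds hξ)
    have hU2 : ∀ᶠ t in 𝓝[>] (0:ℝ), x + t • ξ ∈ U := by
      have hc : ContinuousAt (fun t : ℝ => x + t • ξ) 0 := by fun_prop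
      have : ∀ᶠ t in 𝓝 (0:ℝ), x + t • ξ ∈ U := by
        have := hc.preimage_mem_nhds (hUo.mem_nhds (by simpa using hxU))
        exact this
      exact this.filter_mono nhdsWithin_le_nhds
    filter_upwards [hneg, hU2, self_mem_nhdsWithin] with t hn hU3 ht
    have htpos : (0:ℝ) < t := ht
    have : ρ (x + t • ξ) < 0 := by
      have hs : slope (fun t : ℝ => ρ (x + t • ξ)) 0 t
          = ρ (x + t • ξ) / t := by
        simp [slope, hρx, div_eq_inv_mul]
      rw [hs] at hn
      have := (div_neg_iff).1 hn
      rcases this with ⟨h1, h2⟩ | ⟨h1, h2⟩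
      · linarith
      · exact h1
    have : x + t • ξ ∈ Ω ∩ U := by rw [hΩU]; exact ⟨hU3, this⟩
    exact this.1
  refine mem_tangentConeAt_of_pow_smul (r := (1/2 : ℝ)) (by norm_num) (by norm_num) ?_
  have hpow : Filter.Tendsto (fun m : ℕ => ((1:ℝ)/2) ^ m) Filter.atTop (𝓝[>] (0:ℝ)) := by
    apply tendsto_nhdsWithin_of_tendsto_nhds_of_eventually_within
    · exact tendsto_pow_atTop_nhds_zero_of_lt_one (by norm_num) (by norm_num)
    · exact Filter.Eventually.of_forall fun m => Set.mem_Ioi.2 (by positivity)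
  filter_upwards [hpow.eventually hev] with m hm
  exact subset_closure hm

theorem uniqueDiffOn_closure (hΩo : IsOpen Ω) (hΩsm : HasSmoothBoundary Ω) :
    UniqueDiffOn ℝ (closure Ω) := by
  intro x hx
  have hx' : x ∈ interior Ω ∪ frontier Ω := by
    rw [← closure_eq_interior_union_frontier]; exact hx
  rw [hΩo.interior_eq] at hx'
  rcases hx' with h | h
  · exact uniqueDiffWithinAt_of_mem_nhds
      (Filter.mem_of_superset (hΩo.mem_nhds h) subset_closure)
  · obtain ⟨U, ρ, hUo, hxU, hρsm, hρd, hΩU, hfrU⟩ := hΩsm x h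
    have hρx : ρ x = 0 := by
      have : x ∈ frontier Ω ∩ U := ⟨h, hxU⟩
      rw [hfrU] at this; exact this.2
    have hdρ : fderiv ℝ ρ x ≠ 0 := hρd x hxU
    obtain ⟨w, hw⟩ : ∃ w, fderiv ℝ ρ x w ≠ 0 := by
      by_contra hcon
      push_neg at hcon
      exact hdρ (ContinuousLinearMap.ext fun w => by simp [hcon w])
    set ν : Euc n := if fderiv ℝ ρ x w < 0 then w else -w with hν
    have hνneg : fderiv ℝ ρ x ν < 0 := by
      rw [hν]
      split_ifs with hc
      · exact hc
      · push_neg at hc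
        simp only [map_neg]
        rcases lt_or_eq_of_le hc with h1 | h1
        · linarith
        · exact absurd h1.symm hw
    constructor
    · -- dense span
      have hcone : ∀ ξ : Euc n, fderiv ℝ ρ x ξ < 0 → ξ ∈ tangentConeAt ℝ (closure Ω) x :=
        fun ξ hξ => halfspace_sub_tangentCone hΩo hUo hρsm hΩU hxU hρx hξ
      have hspan : Submodule.span ℝ (tangentConeAt ℝ (closure Ω) x) = ⊤ := by
        rw [eq_top_iff]
        intro η _
        set c : ℝ := -(fderiv ℝ ρ x ν) with hc
        have hcpos : 0 < c := by simp [hc]; linarith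
        set t : ℝ := (|fderiv ℝ ρ x η| + 1) / c with ht
        have htpos : 0 < t := by positivity
        have h1 : fderiv ℝ ρ x (η + t • ν) < 0 := by
          have : fderiv ℝ ρ x (η + t • ν) = fderiv ℝ ρ x η + t * fderiv ℝ ρ x ν := by
            simp
          rw [this]
          have hν' : fderiv ℝ ρ x ν = -c := by rw [hc]; ring
          have h2 : t * fderiv ℝ ρ x ν = -(|fderiv ℝ ρ x η| + 1) := by
            rw [hν', ht]; field_simp
          rw [h2]
          have := le_abs_self (fderiv ℝ ρ x η)
          linarith
        have hm1 : (η + t • ν) ∈ Submodule.span ℝ (tangentConeAt ℝ (closure Ω) x) :=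
          Submodule.subset_span (hcone _ h1)
        have hm2 : ν ∈ Submodule.span ℝ (tangentConeAt ℝ (closure Ω) x) :=
          Submodule.subset_span (hcone _ hνneg)
        have : η = (η + t • ν) - t • ν := by abel
        rw [this]
        exact Submodule.sub_mem _ hm1 (Submodule.smul_mem _ t hm2)
      rw [hspan, Submodule.top_coe]
      exact dense_univ
    · exact subset_closure hx

end AuxA

section AuxG
open Topology Metric Set Complex Filter MeasureTheory

variable {n : ℕ} {Ω : Set (Euc n)}

/-- On the closure, near the chart, ρ ≤ 0. -/
theorem rho_nonpos_on_closure {U : Set (Euc n)} {ρ : Euc n → ℝ}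
    (hUo : IsOpen U) (hρc : Continuous ρ)
    (hΩU : Ω ∩ U = {y ∈ U | ρ y < 0}) {z : Euc n} (hz : z ∈ closure Ω) (hzU : z ∈ U) :
    ρ z ≤ 0 := by
  by_contra hpos
  push_neg at hpos
  have hO : IsOpen (U ∩ ρ ⁻¹' Set.Ioi 0) := hUo.inter (isOpen_Ioi.preimage hρc)
  have hzO : z ∈ U ∩ ρ ⁻¹' Set.Ioi 0 := ⟨hzU, hpos⟩
  obtain ⟨w, hwO, hwΩ⟩ := mem_closure_iff.1 hz _ hO hzO
  have : w ∈ Ω ∩ U := ⟨hwΩ, hwO.1⟩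
  rw [hΩU] at this
  exact absurd this.2 (not_lt.2 (le_of_lt hwO.2))

/-- Quantitative descent along `ν`. -/
theorem rho_descent {ρ : Euc n → ℝ} (hρsm : ContDiff ℝ (⊤ : ℕ∞) ρ)
    {ν : Euc n} {c : ℝ} (hc : 0 < c) {W : Set (Euc n)} (hWc : Convex ℝ W)
    (hW : ∀ z ∈ W, fderiv ℝ ρ z ν < -c)
    {m : Euc n} {d : ℝ} (hd : 0 ≤ d) (hseg : ∀ t ∈ Set.Icc 0 d, m + t • ν ∈ W) :
    ρ (m + d • ν) ≤ ρ m - c * d := by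
  have hasD : ∀ t : ℝ, HasDerivAt (fun t : ℝ => ρ (m + t • ν) + c * t)
      (fderiv ℝ ρ (m + t • ν) ν + c) t := by
    intro t
    have hline : HasDerivAt (fun t : ℝ => m + t • ν) ν t := by
      simpa using ((hasDerivAt_id t).smul_const ν).const_add m
    have hρd : HasFDerivAt ρ (fderiv ℝ ρ (m + t • ν)) (m + t • ν) :=
      (hρsm.differentiable (by simp) _).hasFDerivAt
    have h2 : HasDerivAt (fun t : ℝ => c * t) c t := by
      simpa using (hasDerivAt_id t).const_mul c
    exact (hρd.comp_hasDerivAt t hline).add h2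
  have key : AntitoneOn (fun t : ℝ => ρ (m + t • ν) + c * t) (Set.Icc 0 d) := by
    apply antitoneOn_of_deriv_nonpos (convex_Icc 0 d)
    · exact fun t _ => (hasD t).continuousAt.continuousWithinAt
    · exact fun t _ => (hasD t).differentiableAt.differentiableWithinAt
    · intro t ht
      rw [interior_Icc] at ht
      rw [(hasD t).deriv]
      have := hW (m + t • ν) (hseg t ⟨le_of_lt ht.1, le_of_lt ht.2⟩)
      linarith
  have h0 : (0:ℝ) ∈ Set.Icc 0 d := ⟨le_refl 0, hd⟩
  have h1 : d ∈ Set.Icc 0 d := ⟨hd, le_refl d⟩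
  have := key h0 h1 hd
  simp only at this
  simp only [zero_smul, add_zero, mul_zero] at this
  linarith

/-- The local chain lemma: near each point of the closure, pairs of points can be joined
by three segments inside the closure with total length controlled. -/
theorem exists_local_chain (hΩo : IsOpen Ω) (hΩsm : HasSmoothBoundary Ω) :
    ∀ x₀ ∈ closure Ω, ∃ r C : ℝ, 0 < r ∧ 1 ≤ C ∧
      ∀ x ∈ closure Ω ∩ ball x₀ r, ∀ y ∈ closure Ω ∩ ball x₀ r, ∃ a b : Euc n,
        segment ℝ x a ⊆ closure Ω ∧ segment ℝ a b ⊆ closure Ω ∧ segment ℝ b y ⊆ closure Ω ∧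
        dist x a + dist a b + dist b y ≤ C * dist x y := by
  intro x₀ hx₀
  have hx' : x₀ ∈ Ω ∨ x₀ ∈ frontier Ω := by
    have : x₀ ∈ interior Ω ∪ frontier Ω := by
      rw [← closure_eq_interior_union_frontier]; exact hx₀
    rwa [hΩo.interior_eq] at this
  rcases hx' with h | h
  · -- interior case
    obtain ⟨r, hr, hball⟩ := Metric.isOpen_iff.1 hΩo x₀ h
    refine ⟨r, 1, hr, le_refl 1, ?_⟩
    rintro x ⟨hxs, hxb⟩ y ⟨hys, hyb⟩
    refine ⟨x, y, ?_, ?_, ?_, by simp⟩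
    · rw [segment_same]; exact Set.singleton_subset_iff.2 hxs
    · exact fun z hz => subset_closure (hball ((convex_ball x₀ r).segment_subset hxb hyb hz))
    · rw [segment_same]; exact Set.singleton_subset_iff.2 hys
  · -- boundary case
    obtain ⟨U, ρ, hUo, hxU, hρsm, hρd, hΩU, hfrU⟩ := hΩsm x₀ h
    -- pick unit direction of descent
    obtain ⟨w, hw⟩ : ∃ w, fderiv ℝ ρ x₀ w ≠ 0 := by
      by_contra hcon
      push_neg at hcon
      exact (hρd x₀ hxU) (ContinuousLinearMap.ext fun w => by simp [hcon w])
    have hwn : w ≠ 0 := by rintro rfl; simp at hw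
    set ν₀ : Euc n := ‖w‖⁻¹ • w with hν₀
    set ν : Euc n := if fderiv ℝ ρ x₀ ν₀ < 0 then ν₀ else -ν₀ with hν
    have hνnorm : ‖ν‖ = 1 := by
      have h0 : ‖ν₀‖ = 1 := by
        rw [hν₀, norm_smul]; simp [norm_ne_zero_iff.2 hwn]
      rw [hν]; split_ifs <;> simp [h0]
    have hνneg : fderiv ℝ ρ x₀ ν < 0 := by
      have h0 : fderiv ℝ ρ x₀ ν₀ ≠ 0 := by
        rw [hν₀]; simp only [_root_.map_smul, smul_eq_mul]
        exact mul_ne_zero (inv_ne_zero (norm_ne_zero_iff.2 hwn)) hw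
      rw [hν]; split_ifs with hcase
      · exact hcase
      · push_neg at hcase
        simp only [map_neg, neg_neg, Left.neg_neg_iff]
        exact lt_of_le_of_ne hcase (Ne.symm h0)
    set c : ℝ := -fderiv ℝ ρ x₀ ν / 2 with hcdef
    have hc : 0 < c := by rw [hcdef]; linarith
    -- continuity of fderiv ρ · ν
    have hcont : Continuous fun z => fderiv ℝ ρ z ν := by
      have h1 : Continuous (fderiv ℝ ρ) := hρsm.continuous_fderiv (by simp)
      exact (ContinuousLinearMap.apply ℝ ℝ ν).continuous.comp h1
    have hopen : IsOpen {z | fderiv ℝ ρ z ν < -c} := isOpen_lt hcont continuous_const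
    have hx₀mem : x₀ ∈ {z | fderiv ℝ ρ z ν < -c} := by
      simp only [Set.mem_setOf_eq]; rw [hcdef]; linarith
    obtain ⟨r₁, hr₁, hball₁⟩ := Metric.isOpen_iff.1 (hopen.inter hUo) x₀ ⟨hx₀mem, hxU⟩
    clear hν hν₀ hcdef hx₀mem hνneg
    clear_value ν₀ ν c
    have hballU : ball x₀ r₁ ⊆ U := fun z hz => (hball₁ hz).2
    have hballν : ∀ z ∈ ball x₀ r₁, fderiv ℝ ρ z ν < -c := fun z hz => (hball₁ hz).1
    -- Lipschitz bound for ρ on the ball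
    obtain ⟨L₀, hL₀⟩ := (isCompact_closedBall x₀ r₁).exists_bound_of_continuousOn
      ((hρsm.continuous_fderiv (by simp)).continuousOn (s := closedBall x₀ r₁))
    set L : ℝ := max L₀ 0 with hLdef
    have hLnn : 0 ≤ L := le_max_right _ _
    have hρLip : ∀ z₁ ∈ ball x₀ r₁, ∀ z₂ ∈ ball x₀ r₁, ‖ρ z₁ - ρ z₂‖ ≤ L * ‖z₁ - z₂‖ := by
      intro z₁ hz₁ z₂ hz₂
      exact Convex.norm_image_sub_le_of_norm_fderiv_le
        (fun z _ => (hρsm.differentiable (by simp)) z)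
        (fun z hz => le_trans (hL₀ z (ball_subset_closedBall hz)) (le_max_left _ _))
        (convex_ball x₀ r₁) hz₂ hz₁
    set K : ℝ := L / c + 1 with hKdef
    have hK1 : 1 ≤ K := by
      rw [hKdef]
      have : 0 ≤ L / c := div_nonneg hLnn hc.le
      linarith
    set r : ℝ := r₁ / (8 * (K + 1)) with hrdef
    have hrpos : 0 < r := by rw [hrdef]; positivity
    have hre : r * (8 * (K + 1)) = r₁ := by rw [hrdef]; field_simp
    clear hrdef
    clear_value K r
    refine ⟨r, 2 * K + 1, hrpos, by linarith, ?_⟩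
    rintro x ⟨hxs, hxb⟩ y ⟨hys, hyb⟩
    by_cases hxy : x = y
    · subst hxy
      refine ⟨x, x, ?_, ?_, ?_, by simp⟩ <;>
      · rw [segment_same]; exact Set.singleton_subset_iff.2 hxs
    have hdxy : 0 < dist x y := dist_pos.2 hxy
    set d : ℝ := K * dist x y with hddef
    have hdpos : 0 < d := by positivity
    clear_value d
    have hdxy2 : dist x y < 2 * r := by
      calc dist x y ≤ dist x x₀ + dist x₀ y := dist_triangle _ _ _
        _ < r + r := by rw [mem_ball] at hxb hyb; rw [dist_comm x₀ y]; linarith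
        _ = 2 * r := by ring
    have hdsmall : d < r₁ / 4 := by
      have : d < K * (2 * r) := by
        rw [hddef]; exact mul_lt_mul_of_pos_left hdxy2 (by linarith)
      have h2 : K * (2 * r) ≤ r₁ / 4 := by nlinarith [hrpos, hK1]
      linarith
    -- membership helper: all relevant points are in ball x₀ r₁
    have hmem : ∀ m : Euc n, m ∈ ball x₀ r → ∀ t ∈ Set.Icc (0:ℝ) d, m + t • ν ∈ ball x₀ r₁ := by
      intro m hm t ht
      rw [mem_ball] at hm ⊢
      calc dist (m + t • ν) x₀ ≤ dist (m + t • ν) m + dist m x₀ := dist_triangle _ _ _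
        _ = ‖t • ν‖ + dist m x₀ := by simp [dist_self_add_left]
        _ ≤ t + dist m x₀ := by
            rw [norm_smul, hνnorm, mul_one, Real.norm_of_nonneg ht.1]
        _ < d + r := by have := ht.2; linarith [hm]
        _ < r₁ := by
            have : r ≤ r₁ / 4 := by nlinarith [hrpos, hK1]
            linarith
    have hrr₁ : ball x₀ r ⊆ ball x₀ r₁ := ball_subset_ball (by nlinarith [hrpos, hK1])
    -- descent inequality applied from a point m of the ball
    have hdesc : ∀ m : Euc n, m ∈ ball x₀ r → ∀ t ∈ Set.Icc (0:ℝ) d,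
        ρ (m + t • ν) ≤ ρ m - c * t := by
      intro m hm t ht
      apply rho_descent hρsm hc (convex_ball x₀ r₁) hballν ht.1
      intro t' ht'
      exact hmem m hm t' ⟨ht'.1, le_trans ht'.2 ht.2⟩
    -- points of the closure in the small ball have ρ ≤ 0
    have hρ0 : ∀ z ∈ closure Ω ∩ ball x₀ r, ρ z ≤ 0 := fun z hz =>
      rho_nonpos_on_closure hUo hρsm.continuous hΩU hz.1 (hballU (hrr₁ hz.2))
    -- membership in Ω from ρ < 0
    have hΩmem : ∀ z : Euc n, z ∈ ball x₀ r₁ → ρ z < 0 → z ∈ Ω := by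
      intro z hz hneg
      have : z ∈ Ω ∩ U := by rw [hΩU]; exact ⟨hballU hz, hneg⟩
      exact this.1
    -- vertical segments are in the closure
    have hvert : ∀ m ∈ closure Ω ∩ ball x₀ r, segment ℝ m (m + d • ν) ⊆ closure Ω := by
      rintro m hm z hz
      rw [segment_eq_image' (𝕜 := ℝ)] at hz
      obtain ⟨θ, hθ, rfl⟩ := hz
      simp only [add_sub_cancel_left, smul_smul]
      rcases eq_or_lt_of_le hθ.1 with hθ0 | hθ0
      · rw [← hθ0]; simpa using hm.1
      · apply subset_closure
        apply hΩmem
        · exact hmem m hm.2 (θ * d) ⟨by positivity, by nlinarith [hθ.2]⟩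
        · have := hdesc m hm.2 (θ * d) ⟨by positivity, by nlinarith [hθ.2]⟩
          have h0 := hρ0 m hm
          nlinarith [mul_pos hc (mul_pos hθ0 hdpos), mul_pos hc hdpos,
            mul_le_mul_of_nonneg_left hθ.2 hc.le]
    refine ⟨x + d • ν, y + d • ν, hvert x ⟨hxs, hxb⟩, ?_, ?_, ?_⟩
    · -- middle segment: inside Ω
      intro z hz
      have : ∃ m ∈ segment ℝ x y, z = m + d • ν := by
        rw [segment_eq_image' (𝕜 := ℝ)] at hz ⊢
        obtain ⟨θ, hθ, rfl⟩ := hz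
        refine ⟨x + θ • (y - x), Set.mem_image_of_mem _ hθ, by
          simp only [add_sub_add_right_eq_sub]
          module⟩
      obtain ⟨m, hmseg, rfl⟩ := this
      have hmball : m ∈ ball x₀ r := (convex_ball x₀ r).segment_subset hxb hyb hmseg
      apply subset_closure
      apply hΩmem _ (hmem m hmball d ⟨hdpos.le, le_refl d⟩)
      have hdm : ρ (m + d • ν) ≤ ρ m - c * d := hdesc m hmball d ⟨hdpos.le, le_refl d⟩
      have hρm : ρ m ≤ L * dist x y := by
        have := hρLip m (hrr₁ hmball) x (hrr₁ hxb)
        have hx0 := hρ0 x ⟨hxs, hxb⟩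
        have hmx : ‖m - x‖ ≤ dist x y := by
          rw [segment_eq_image' (𝕜 := ℝ)] at hmseg
          obtain ⟨θ, hθ, rfl⟩ := hmseg
          simp only [add_sub_cancel_left]
          rw [norm_smul, Real.norm_of_nonneg hθ.1, dist_eq_norm]
          rw [show ‖x - y‖ = ‖y - x‖ from norm_sub_rev x y]
          nlinarith [norm_nonneg (y - x), hθ.2]
        have habs : ρ m - ρ x ≤ L * ‖m - x‖ := le_trans (le_abs_self _) this
        nlinarith [mul_le_mul_of_nonneg_left hmx hLnn]
      have : c * d = c * (L / c + 1) * dist x y := by rw [hddef, hKdef]; ring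
      have hcd : L * dist x y + c * dist x y ≤ c * d := by
        rw [this]
        have hcc : c * (L / c + 1) = L + c := by field_simp
        rw [hcc]; exact le_of_eq (by ring)
      nlinarith
    · -- third segment
      have := hvert y ⟨hys, hyb⟩
      rw [show segment ℝ y (y + d • ν) = segment ℝ (y + d • ν) y from segment_symm ℝ _ _] at this
      exact this
    · -- lengths
      have h1 : dist x (x + d • ν) = d := by
        rw [dist_comm]
        simp [dist_self_add_left, norm_smul, hνnorm, Real.norm_of_nonneg hdpos.le]
      have h2 : dist (x + d • ν) (y + d • ν) = dist x y := dist_add_right x y (d • ν)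
      have h3 : dist (y + d • ν) y = d := by
        simp [dist_self_add_left, norm_smul, hνnorm, Real.norm_of_nonneg hdpos.le]
      rw [h1, h2, h3, hddef]
      exact le_of_eq (by ring)

end AuxG

section AuxB
open Topology Metric Set Complex Filter MeasureTheory

variable {n : ℕ} {Ω : Set (Euc n)} {α : ℝ}

theorem segment_mvt {s : Set (Euc n)} {f : Euc n → ℂ} (hf : DifferentiableOn ℝ f s)
    {D : ℝ} (hD : ∀ z ∈ s, ‖fderivWithin ℝ f s z‖ ≤ D) {p q : Euc n}
    (hseg : segment ℝ p q ⊆ s) : ‖f q - f p‖ ≤ D * dist q p := by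
  have := Convex.norm_image_sub_le_of_norm_hasFDerivWithin_le
    (f' := fun z => fderivWithin ℝ f s z)
    (fun z hz => ((hf z (hseg hz)).hasFDerivWithinAt).mono hseg)
    (fun z hz => hD z (hseg hz)) (convex_segment p q)
    (left_mem_segment ℝ p q) (right_mem_segment ℝ p q)
  rw [dist_eq_norm]; exact this

theorem holder_global (hΩo : IsOpen Ω) (hΩbd : Bornology.IsBounded Ω)
    (hΩsm : HasSmoothBoundary Ω) (hα0 : 0 < α) (hα1 : α < 1) :
    ∀ f : Euc n → ℂ, ContDiffOn ℝ 1 f (closure Ω) →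
    ∃ L : ℝ, 0 ≤ L ∧ ∀ x ∈ closure Ω, ∀ y ∈ closure Ω, ‖f x - f y‖ ≤ L * dist x y ^ α := by
  intro f hf
  have hK : IsCompact (closure Ω) := hΩbd.isCompact_closure
  rcases Set.eq_empty_or_nonempty (closure Ω) with hse | hs
  · exact ⟨0, le_refl 0, fun x hx => absurd hx (by rw [hse]; exact Set.notMem_empty x)⟩
  have hud : UniqueDiffOn ℝ (closure Ω) := uniqueDiffOn_closure hΩo hΩsm
  obtain ⟨D₀, hD₀⟩ := hK.exists_bound_of_continuousOn (hf.continuousOn_fderivWithin hud le_rfl)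
  obtain ⟨S₀, hS₀⟩ := hK.exists_bound_of_continuousOn hf.continuousOn
  set D := max D₀ 0 with hDdef
  set S := max S₀ 0 with hSdef
  have hDnn : 0 ≤ D := le_max_right _ _
  have hSnn : 0 ≤ S := le_max_right _ _
  have hD : ∀ z ∈ closure Ω, ‖fderivWithin ℝ f (closure Ω) z‖ ≤ D :=
    fun z hz => le_trans (hD₀ z hz) (le_max_left _ _)
  have hS : ∀ z ∈ closure Ω, ‖f z‖ ≤ S := fun z hz => le_trans (hS₀ z hz) (le_max_left _ _)
  choose! r C hr hC hchain using exists_local_chain hΩo hΩsm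
  have hcover : closure Ω ⊆ ⋃ p : closure Ω, ball (p : Euc n) (r p / 2) := by
    intro x hx
    exact Set.mem_iUnion.2 ⟨⟨x, hx⟩, mem_ball_self (by have := hr x hx; linarith)⟩
  obtain ⟨T, hT⟩ := hK.elim_finite_subcover _ (fun p => isOpen_ball) hcover
  have hTne : T.Nonempty := by
    obtain ⟨x, hx⟩ := hs
    obtain ⟨p, hp⟩ := Set.mem_iUnion₂.1 (hT hx)
    exact ⟨p, hp.1⟩
  set δ : ℝ := T.inf' hTne (fun p => r (p : Euc n) / 2) with hδdef
  have hδpos : 0 < δ := by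
    rw [hδdef, Finset.lt_inf'_iff]
    intro p _
    have := hr (p : Euc n) p.2
    linarith
  set Cm : ℝ := T.sup' hTne (fun p => C (p : Euc n)) with hCmdef
  have hCm : ∀ p ∈ T, C (p : Euc n) ≤ Cm := fun p hp => by rw [hCmdef]; exact Finset.le_sup' (fun q : ↥(closure Ω) => C (q : Euc n)) hp
  have hCmnn : 0 ≤ Cm := by
    obtain ⟨p, hp⟩ := hTne
    have := hC (p : Euc n) p.2
    linarith [hCm p hp]
  have hclose : ∀ x ∈ closure Ω, ∀ y ∈ closure Ω, dist x y < δ →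
      ‖f x - f y‖ ≤ D * Cm * dist x y := by
    intro x hx y hy hdlt
    obtain ⟨p, hpT, hxp⟩ := Set.mem_iUnion₂.1 (hT hx)
    have hδp : δ ≤ r (p : Euc n) / 2 := Finset.inf'_le _ hpT
    rw [mem_ball] at hxp
    have hyp : y ∈ ball (p : Euc n) (r (p : Euc n)) := by
      rw [mem_ball]
      calc dist y (p : Euc n) ≤ dist y x + dist x (p : Euc n) := dist_triangle _ _ _
        _ < δ + r (p : Euc n) / 2 := by rw [dist_comm y x]; linarith
        _ ≤ r (p : Euc n) := by linarith
    have hxp' : x ∈ ball (p : Euc n) (r (p : Euc n)) := by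
      rw [mem_ball]
      have := hr (p : Euc n) p.2
      linarith
    obtain ⟨a, b, h1, h2, h3, hlen⟩ := hchain (p : Euc n) p.2 x ⟨hx, hxp'⟩ y ⟨hy, hyp⟩
    have hdf := hf.differentiableOn (by norm_num)
    have e1 : ‖f a - f x‖ ≤ D * dist a x := segment_mvt hdf hD h1
    have e2 : ‖f b - f a‖ ≤ D * dist b a := segment_mvt hdf hD h2
    have e3 : ‖f y - f b‖ ≤ D * dist y b := segment_mvt hdf hD h3
    have tri : ‖f x - f y‖ ≤ ‖f a - f x‖ + ‖f b - f a‖ + ‖f y - f b‖ := by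
      have : f x - f y = -((f a - f x) + (f b - f a) + (f y - f b)) := by ring
      rw [this, norm_neg]
      exact le_trans (norm_add_le _ _) (by linarith [norm_add_le (f a - f x) (f b - f a)])
    have hsum : dist a x + dist b a + dist y b ≤ C (p : Euc n) * dist x y := by
      rw [dist_comm a x, dist_comm b a, dist_comm y b]; linarith
    calc ‖f x - f y‖ ≤ ‖f a - f x‖ + ‖f b - f a‖ + ‖f y - f b‖ := tri
      _ ≤ D * dist a x + D * dist b a + D * dist y b := by
          have := dist_nonneg (x := a) (y := x)
          gcongr <;> linarith
      _ = D * (dist a x + dist b a + dist y b) := by ring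
      _ ≤ D * (C (p : Euc n) * dist x y) := mul_le_mul_of_nonneg_left hsum hDnn
      _ ≤ D * (Cm * dist x y) := mul_le_mul_of_nonneg_left
          (mul_le_mul_of_nonneg_right (hCm p hpT) dist_nonneg) hDnn
      _ = D * Cm * dist x y := by ring
  refine ⟨max (D * Cm * δ ^ (1 - α)) (2 * S / δ ^ α), le_trans ?_ (le_max_left _ _), ?_⟩
  · positivity
  intro x hx y hy
  rcases eq_or_ne x y with rfl | hne
  · simp [Real.zero_rpow (ne_of_gt hα0)]
  have hdpos : 0 < dist x y := dist_pos.2 hne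
  have hrnn : (0:ℝ) ≤ dist x y ^ α := Real.rpow_nonneg dist_nonneg α
  rcases lt_or_ge (dist x y) δ with hlt | hge
  · have hcl := hclose x hx y hy hlt
    have heq : dist x y = dist x y ^ α * dist x y ^ (1-α) := by
      rw [← Real.rpow_add hdpos]; simp
    calc ‖f x - f y‖ ≤ D * Cm * dist x y := hcl
      _ = D * Cm * (dist x y ^ α * dist x y ^ (1-α)) := by rw [← heq]
      _ ≤ D * Cm * (dist x y ^ α * δ ^ (1-α)) := by
          apply mul_le_mul_of_nonneg_left _ (by positivity)
          exact mul_le_mul_of_nonneg_left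
            (Real.rpow_le_rpow dist_nonneg hlt.le (by linarith)) hrnn
      _ = (D * Cm * δ ^ (1-α)) * dist x y ^ α := by ring
      _ ≤ max (D * Cm * δ ^ (1 - α)) (2 * S / δ ^ α) * dist x y ^ α :=
          mul_le_mul_of_nonneg_right (le_max_left _ _) hrnn
  · have hδα : (0:ℝ) < δ ^ α := Real.rpow_pos_of_pos hδpos α
    calc ‖f x - f y‖ ≤ ‖f x‖ + ‖f y‖ := norm_sub_le _ _
      _ ≤ 2 * S := by linarith [hS x hx, hS y hy]
      _ = (2 * S / δ ^ α) * δ ^ α := by field_simp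
      _ ≤ (2 * S / δ ^ α) * dist x y ^ α := mul_le_mul_of_nonneg_left
          (Real.rpow_le_rpow hδpos.le hge hα0.le) (by positivity)
      _ ≤ max (D * Cm * δ ^ (1 - α)) (2 * S / δ ^ α) * dist x y ^ α :=
          mul_le_mul_of_nonneg_right (le_max_right _ _) hrnn

end AuxB

section AuxC
open Topology Metric Set Complex Filter MeasureTheory

variable {n : ℕ} {s : Set (Euc n)} {α : ℝ} {f g : Euc n → ℂ}

/-! ### Norm API -/

theorem supNorm_nonneg (s : Set (Euc n)) (f : Euc n → ℂ) : 0 ≤ supNorm s f :=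
  Real.sSup_nonneg (by rintro x ⟨y, _, rfl⟩; exact norm_nonneg _)

theorem holderSemi_nonneg (α : ℝ) (s : Set (Euc n)) (f : Euc n → ℂ) : 0 ≤ holderSemi α s f :=
  Real.sSup_nonneg' ⟨0, Set.mem_union_left _ rfl, le_refl 0⟩

theorem cαNorm_nonneg (α : ℝ) (s : Set (Euc n)) (f : Euc n → ℂ) : 0 ≤ cαNorm α s f :=
  add_nonneg (holderSemi_nonneg α s f) (supNorm_nonneg s f)

theorem c2αNorm_nonneg (α : ℝ) (s : Set (Euc n)) (f : Euc n → ℂ) : 0 ≤ c2αNorm α s f :=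
  add_nonneg (Finset.sum_nonneg fun j _ => Finset.sum_nonneg fun k _ =>
    holderSemi_nonneg α s _) (supNorm_nonneg s f)

theorem supNorm_le {C : ℝ} (hC : 0 ≤ C) (h : ∀ x ∈ s, ‖f x‖ ≤ C) : supNorm s f ≤ C :=
  Real.sSup_le (by rintro a ⟨y, hy, rfl⟩; exact h y hy) hC

theorem holderSemi_le (hα0 : 0 < α) {C : ℝ} (hC : 0 ≤ C)
    (h : ∀ x ∈ s, ∀ y ∈ s, ‖f x - f y‖ ≤ C * dist x y ^ α) : holderSemi α s f ≤ C := by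
  apply Real.sSup_le _ hC
  rintro a (rfl | ⟨⟨x, y⟩, ⟨hx, hy, hne⟩, rfl⟩)
  · exact hC
  · have hd : (0:ℝ) < dist x y ^ α := Real.rpow_pos_of_pos (dist_pos.2 hne) α
    rw [div_le_iff₀ hd]
    exact h x hx y hy

theorem norm_le_supNorm (hK : IsCompact s) (hf : ContinuousOn f s) {x : Euc n} (hx : x ∈ s) :
    ‖f x‖ ≤ supNorm s f := by
  apply le_csSup _ (Set.mem_image_of_mem _ hx)
  obtain ⟨C, hC⟩ := hK.exists_bound_of_continuousOn hf
  exact ⟨C, by rintro a ⟨y, hy, rfl⟩; exact hC y hy⟩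

theorem sub_le_holderSemi (hα0 : 0 < α) {L : ℝ}
    (hL : ∀ x ∈ s, ∀ y ∈ s, ‖f x - f y‖ ≤ L * dist x y ^ α)
    {x y : Euc n} (hx : x ∈ s) (hy : y ∈ s) :
    ‖f x - f y‖ ≤ holderSemi α s f * dist x y ^ α := by
  rcases eq_or_ne x y with rfl | hne
  · simp [Real.zero_rpow (ne_of_gt hα0)]
  have hd : (0:ℝ) < dist x y ^ α := Real.rpow_pos_of_pos (dist_pos.2 hne) α
  have hbdd : BddAbove ({0} ∪ (fun p : Euc n × Euc n => ‖f p.1 - f p.2‖ / dist p.1 p.2 ^ α) ''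
      {p : Euc n × Euc n | p.1 ∈ s ∧ p.2 ∈ s ∧ p.1 ≠ p.2}) := by
    refine ⟨max L 0, ?_⟩
    rintro a (rfl | ⟨⟨x', y'⟩, ⟨hx', hy', hne'⟩, rfl⟩)
    · exact le_max_right _ _
    · have hd' : (0:ℝ) < dist x' y' ^ α := Real.rpow_pos_of_pos (dist_pos.2 hne') α
      refine le_trans ?_ (le_max_left _ _)
      rw [div_le_iff₀ hd']
      exact hL x' hx' y' hy'
  have hmem : ‖f x - f y‖ / dist x y ^ α ∈ ({0} ∪ (fun p : Euc n × Euc n =>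
      ‖f p.1 - f p.2‖ / dist p.1 p.2 ^ α) '' {p : Euc n × Euc n | p.1 ∈ s ∧ p.2 ∈ s ∧ p.1 ≠ p.2}) :=
    Set.mem_union_right _ ⟨(x, y), ⟨hx, hy, hne⟩, rfl⟩
  have := le_csSup hbdd hmem
  rw [div_le_iff₀ hd] at this
  exact this

/-! ### `HBnd`: simultaneous sup and Hölder bound -/

def HBnd (α : ℝ) (s : Set (Euc n)) (C : ℝ) (f : Euc n → ℂ) : Prop :=
  0 ≤ C ∧ (∀ x ∈ s, ‖f x‖ ≤ C) ∧ ∀ x ∈ s, ∀ y ∈ s, ‖f x - f y‖ ≤ C * dist x y ^ α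

theorem HBnd.cαNorm_le (hα0 : 0 < α) {C : ℝ} (h : HBnd α s C f) : cαNorm α s f ≤ 2 * C := by
  have h1 : holderSemi α s f ≤ C := holderSemi_le hα0 h.1 h.2.2
  have h2 : supNorm s f ≤ C := supNorm_le h.1 h.2.1
  unfold cαNorm; linarith

theorem HBnd.congr {C : ℝ} (h : HBnd α s C f) (hfg : ∀ x ∈ s, f x = g x) : HBnd α s C g :=
  ⟨h.1, fun x hx => hfg x hx ▸ h.2.1 x hx,
   fun x hx y hy => by rw [← hfg x hx, ← hfg y hy]; exact h.2.2 x hx y hy⟩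

theorem HBnd.mono {C D : ℝ} (h : HBnd α s C f) (hCD : C ≤ D) : HBnd α s D f :=
  ⟨le_trans h.1 hCD, fun x hx => le_trans (h.2.1 x hx) hCD,
   fun x hx y hy => le_trans (h.2.2 x hx y hy)
     (mul_le_mul_of_nonneg_right hCD (Real.rpow_nonneg dist_nonneg α))⟩

theorem HBnd.add {C D : ℝ} (hf : HBnd α s C f) (hg : HBnd α s D g) :
    HBnd α s (C + D) (fun x => f x + g x) := by
  refine ⟨add_nonneg hf.1 hg.1, fun x hx => ?_, fun x hx y hy => ?_⟩
  · exact le_trans (norm_add_le _ _) (add_le_add (hf.2.1 x hx) (hg.2.1 x hx))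
  · have : f x + g x - (f y + g y) = (f x - f y) + (g x - g y) := by ring
    rw [this, add_mul]
    exact le_trans (norm_add_le _ _) (add_le_add (hf.2.2 x hx y hy) (hg.2.2 x hx y hy))

theorem HBnd.neg {C : ℝ} (hf : HBnd α s C f) : HBnd α s C (fun x => -f x) := by
  refine ⟨hf.1, fun x hx => by simpa using hf.2.1 x hx, fun x hx y hy => ?_⟩
  have : -f x - -f y = -(f x - f y) := by ring
  rw [this, norm_neg]
  exact hf.2.2 x hx y hy

theorem HBnd.const_mul {C R : ℝ} (hf : HBnd α s C f) {z : ℂ} (hz : ‖z‖ ≤ R) :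
    HBnd α s (R * C) (fun x => z * f x) := by
  have hR : 0 ≤ R := le_trans (norm_nonneg z) hz
  refine ⟨mul_nonneg hR hf.1, fun x hx => ?_, fun x hx y hy => ?_⟩
  · rw [norm_mul]
    exact mul_le_mul hz (hf.2.1 x hx) (norm_nonneg _) hR
  · have : z * f x - z * f y = z * (f x - f y) := by ring
    rw [this, norm_mul, mul_assoc]
    exact mul_le_mul hz (hf.2.2 x hx y hy) (norm_nonneg _) (by positivity)

theorem HBnd.mul {C D : ℝ} (hf : HBnd α s C f) (hg : HBnd α s D g) :
    HBnd α s (2 * C * D) (fun x => f x * g x) := by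
  have hC := hf.1; have hD := hg.1
  refine ⟨by positivity, fun x hx => ?_, fun x hx y hy => ?_⟩
  · rw [norm_mul]
    calc ‖f x‖ * ‖g x‖ ≤ C * D :=
          mul_le_mul (hf.2.1 x hx) (hg.2.1 x hx) (norm_nonneg _) hC
      _ ≤ 2 * C * D := by nlinarith
  · have : f x * g x - f y * g y = f x * (g x - g y) + (f x - f y) * g y := by ring
    rw [this]
    have h1 : ‖f x * (g x - g y)‖ ≤ C * (D * dist x y ^ α) := by
      rw [norm_mul]
      exact mul_le_mul (hf.2.1 x hx) (hg.2.2 x hx y hy) (norm_nonneg _) hC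
    have h2 : ‖(f x - f y) * g y‖ ≤ C * dist x y ^ α * D := by
      rw [norm_mul]
      exact mul_le_mul (hf.2.2 x hx y hy) (hg.2.1 y hy) (norm_nonneg _) (by positivity)
    calc ‖f x * (g x - g y) + (f x - f y) * g y‖
        ≤ ‖f x * (g x - g y)‖ + ‖(f x - f y) * g y‖ := norm_add_le _ _
      _ ≤ C * (D * dist x y ^ α) + C * dist x y ^ α * D := add_le_add h1 h2
      _ = 2 * C * D * dist x y ^ α := by ring

theorem hbnd_sum {ι : Type*} (t : Finset ι) (c : ι → ℝ) (F : ι → Euc n → ℂ)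
    (h : ∀ j ∈ t, HBnd α s (c j) (F j)) :
    HBnd α s (∑ j ∈ t, c j) (fun x => ∑ j ∈ t, F j x) := by
  classical
  induction t using Finset.induction_on with
  | empty => exact ⟨le_refl 0, fun x _ => by simp, fun x _ y _ => by
      simp [Real.rpow_nonneg dist_nonneg α]⟩
  | insert a t' hj ih =>
      rw [Finset.sum_insert hj]
      exact ((h a (Finset.mem_insert_self a t')).add
        (ih fun j hjt => h j (Finset.mem_insert_of_mem hjt))).congr
        (fun x _ => by rw [Finset.sum_insert hj])

/-! ### Lipschitz bound for entire functions via the Cauchy estimate -/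

theorem entire_lipschitz {h : ℂ → ℂ} (hd : ∀ z, AnalyticAt ℂ h z) {M R' : ℝ}
    (hM : ∀ z : ℂ, ‖z‖ ≤ R' + 1 → ‖h z‖ ≤ M) :
    ∀ z₁ z₂ : ℂ, ‖z₁‖ ≤ R' → ‖z₂‖ ≤ R' →
    ‖h z₁ - h z₂‖ ≤ M * ‖z₁ - z₂‖ := by
  intro z₁ z₂ h₁ h₂
  have hdiff : Differentiable ℂ h := fun z => (hd z).differentiableAt
  have hderiv : ∀ z : ℂ, ‖z‖ ≤ R' → ‖deriv h z‖ ≤ M := by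
    intro z hz
    have e1 : Complex.cderiv 1 h z = deriv h z :=
      Complex.cderiv_eq_deriv isOpen_univ hdiff.differentiableOn one_pos (Set.subset_univ _)
    rw [← e1]
    have hsph : ∀ w ∈ sphere z 1, ‖h w‖ ≤ M := by
      intro w hw
      apply hM
      rw [mem_sphere_iff_norm] at hw
      have h3 : ‖w - z‖ = 1 := by exact hw
      have : ‖w‖ ≤ ‖z‖ + 1 := by
        calc ‖w‖ = ‖w - z + z‖ := by ring_nf
          _ ≤ ‖w - z‖ + ‖z‖ := norm_add_le _ _
          _ = ‖z‖ + 1 := by linarith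
      linarith
    have h2 := Complex.norm_cderiv_le (z := z) (f := h) one_pos hsph
    simpa using h2
  have := Convex.norm_image_sub_le_of_norm_hasDerivWithin_le
    (f := h) (f' := fun z => deriv h z) (s := closedBall (0:ℂ) R') (C := M)
    (fun z hz => (hdiff z).hasDerivAt.hasDerivWithinAt)
    (fun z hz => hderiv z (by simpa using mem_closedBall_zero_iff.1 hz))
    (convex_closedBall _ _)
    (mem_closedBall_zero_iff.2 (by exact h₂))
    (mem_closedBall_zero_iff.2 (by exact h₁))
  exact this

end AuxC

section AuxD
open Topology Metric Set Complex Filter MeasureTheory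

variable {n : ℕ} {s : Set (Euc n)} {α : ℝ}

theorem pdW_add_smul (hud : UniqueDiffOn ℝ s) {u v : Euc n → ℂ} {x : Euc n} (hx : x ∈ s)
    (hu : DifferentiableWithinAt ℝ u s x) (hv : DifferentiableWithinAt ℝ v s x) (lam : ℂ)
    (j : Fin n) :
    pdW s (fun y => u y + lam * v y) j x = pdW s u j x + lam * pdW s v j x := by
  unfold pdW
  have h1 : (fun y => u y + lam * v y) = fun y => u y + lam • v y := by
    funext y; simp [smul_eq_mul]
  rw [h1, fderivWithin_fun_add (g := fun y => lam • v y) (hud x hx) hu (hv.const_smul lam),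
    fderivWithin_fun_const_smul (hud x hx) hv lam]
  simp [smul_eq_mul]

theorem contDiffOn_pdW (hud : UniqueDiffOn ℝ s) {u : Euc n → ℂ} (h : ContDiffOn ℝ 2 u s)
    (j : Fin n) : ContDiffOn ℝ 1 (pdW s u j) s := by
  have h1 : ContDiffOn ℝ 1 (fderivWithin ℝ u s) s := h.fderivWithin hud (by norm_num)
  exact h1.clm_apply contDiffOn_const

theorem continuousOn_pdW (hud : UniqueDiffOn ℝ s) {u : Euc n → ℂ} (h : ContDiffOn ℝ 1 u s)
    (j : Fin n) : ContinuousOn (pdW s u j) s := by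
  have h1 := h.continuousOn_fderivWithin hud le_rfl
  exact h1.clm_apply continuousOn_const

theorem pdW_congr {f g : Euc n → ℂ} (hfg : ∀ y ∈ s, f y = g y) {x : Euc n} (hx : x ∈ s)
    (k : Fin n) : pdW s f k x = pdW s g k x := by
  unfold pdW
  rw [fderivWithin_congr (fun y hy => hfg y hy) (hfg x hx)]

theorem pdW2_add_smul (hud : UniqueDiffOn ℝ s) {u v : Euc n → ℂ}
    (hu : ContDiffOn ℝ 2 u s) (hv : ContDiffOn ℝ 2 v s) (lam : ℂ) (j k : Fin n)
    {x : Euc n} (hx : x ∈ s) :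
    pdW s (pdW s (fun y => u y + lam * v y) j) k x
      = pdW s (pdW s u j) k x + lam * pdW s (pdW s v j) k x := by
  have hdu : DifferentiableOn ℝ u s := hu.differentiableOn (by norm_num)
  have hdv : DifferentiableOn ℝ v s := hv.differentiableOn (by norm_num)
  have heq : ∀ y ∈ s, pdW s (fun y => u y + lam * v y) j y
      = pdW s u j y + lam * pdW s v j y :=
    fun y hy => pdW_add_smul hud hy (hdu y hy) (hdv y hy) lam j
  rw [pdW_congr heq hx k]
  exact pdW_add_smul hud hx ((contDiffOn_pdW hud hu j).differentiableOn (by norm_num) x hx)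
    ((contDiffOn_pdW hud hv j).differentiableOn (by norm_num) x hx) lam k

theorem pdW2_sub (hud : UniqueDiffOn ℝ s) {u v : Euc n → ℂ}
    (hu : ContDiffOn ℝ 2 u s) (hv : ContDiffOn ℝ 2 v s) (j k : Fin n)
    {x : Euc n} (hx : x ∈ s) :
    pdW s (pdW s (fun y => u y - v y) j) k x
      = pdW s (pdW s u j) k x - pdW s (pdW s v j) k x := by
  have h1 : (fun y => u y - v y) = fun y => u y + (-1 : ℂ) * v y := by
    funext y; ring
  rw [h1, pdW2_add_smul hud hu hv (-1) j k hx]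
  ring

theorem exists_hbnd (hK : IsCompact s) {f : Euc n → ℂ} (hc : ContinuousOn f s) {L : ℝ}
    (hL : ∀ x ∈ s, ∀ y ∈ s, ‖f x - f y‖ ≤ L * dist x y ^ α) : ∃ C, HBnd α s C f := by
  obtain ⟨S, hS⟩ := hK.exists_bound_of_continuousOn hc
  refine ⟨max L 0 + max S 0, ⟨by positivity, fun x hx => ?_, fun x hx y hy => ?_⟩⟩
  · have h1 : ‖f x‖ ≤ max S 0 := le_trans (hS x hx) (le_max_left _ _)
    have h2 : (0:ℝ) ≤ max L 0 := le_max_right _ _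
    linarith
  · calc ‖f x - f y‖ ≤ L * dist x y ^ α := hL x hx y hy
      _ ≤ (max L 0 + max S 0) * dist x y ^ α := by
          apply mul_le_mul_of_nonneg_right _ (Real.rpow_nonneg dist_nonneg α)
          have := le_max_left L 0
          have := le_max_right S 0
          linarith

theorem exists_hbnd_pdW2 (hud : UniqueDiffOn ℝ s) (hK : IsCompact s)
    {u : Euc n → ℂ} (hu : MemC2Holder α s u) (j k : Fin n) :
    ∃ C, HBnd α s C (pdW s (pdW s u j) k) := by
  obtain ⟨hreg, L, hL⟩ := hu
  exact exists_hbnd hK (continuousOn_pdW hud (contDiffOn_pdW hud hreg j) k)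
    (fun x hx y hy => hL j k x hx y hy)

end AuxD

theorem stmt18 {n : ℕ} (hn : 2 ≤ n) (Ω : Set (Euc n)) (hΩo : IsOpen Ω)
    (hΩbd : Bornology.IsBounded Ω) (hΩsm : HasSmoothBoundary Ω)
    (α : ℝ) (hα0 : 0 < α) (hα1 : α < 1)
    (q : Euc n → ℂ) (hq : MemHolderOn α (closure Ω) q)
    (V : Euc n → ℂ → ℂ)
    (hVan : ∀ x ∈ closure Ω, ∀ z : ℂ, AnalyticAt ℂ (V x) z)
    (hVmem : ∀ z : ℂ, MemHolderOn α (closure Ω) (fun x => V x z))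
    (hVbdd : ∀ R : ℝ, 0 < R → ∃ M : ℝ, ∀ z : ℂ, ‖z‖ ≤ R →
      cαNorm α (closure Ω) (fun x => V x z) ≤ M)
    (hV0 : ∀ x ∈ closure Ω, V x 0 = 0) :
    ∀ f₀ g u₀ v : Euc n → ℂ,
      MemC2HolderBdry α Ω f₀ → MemC2HolderBdry α Ω g →
      MemC2Holder α (closure Ω) u₀ → MemC2Holder α (closure Ω) v →
      (∀ x ∈ closure Ω, ∀ lam₀ : ℂ,
        AnalyticAt ℂ (fun lam : ℂ =>
          -lapW (closure Ω) (fun y => u₀ y + lam * v y) x +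
            q x * gradDotW (closure Ω) (fun y => u₀ y + lam * v y)
              (fun y => u₀ y + lam * v y) x +
            V x (u₀ x + lam * v x)) lam₀) ∧
      (∀ x ∈ frontier Ω, ∀ lam₀ : ℂ,
        AnalyticAt ℂ (fun lam : ℂ => (u₀ x + lam * v x) - (f₀ x + lam * g x)) lam₀) ∧
      (∀ R : ℝ, 0 < R → ∃ M : ℝ, ∀ lam : ℂ, ‖lam‖ ≤ R →
        cαNorm α (closure Ω) (fun x =>
          -lapW (closure Ω) (fun y => u₀ y + lam * v y) x +
            q x * gradDotW (closure Ω) (fun y => u₀ y + lam * v y)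
              (fun y => u₀ y + lam * v y) x +
            V x (u₀ x + lam * v x)) ≤ M ∧
        c2αBdryNorm α Ω (fun x => (u₀ x + lam * v x) - (f₀ x + lam * g x)) ≤ M) := by
  intro f₀ g u₀ v hf₀ hg hu₀ hv
  have hud : UniqueDiffOn ℝ (closure Ω) := uniqueDiffOn_closure hΩo hΩsm
  have hK : IsCompact (closure Ω) := hΩbd.isCompact_closure
  have hu2 : ContDiffOn ℝ 2 u₀ (closure Ω) := hu₀.1
  have hv2 : ContDiffOn ℝ 2 v (closure Ω) := hv.1
  have hu1 : ContDiffOn ℝ 1 u₀ (closure Ω) := hu2.of_le (by norm_num)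
  have hv1 : ContDiffOn ℝ 1 v (closure Ω) := hv2.of_le (by norm_num)
  -- pointwise identities
  have hlap : ∀ (lam : ℂ), ∀ x ∈ closure Ω,
      lapW (closure Ω) (fun y => u₀ y + lam * v y) x
        = lapW (closure Ω) u₀ x + lam * lapW (closure Ω) v x := by
    intro lam x hx
    unfold lapW
    rw [Finset.mul_sum, ← Finset.sum_add_distrib]
    exact Finset.sum_congr rfl fun j _ => pdW2_add_smul hud hu2 hv2 lam j j hx
  have hpd : ∀ (lam : ℂ), ∀ x ∈ closure Ω, ∀ j : Fin n,
      pdW (closure Ω) (fun y => u₀ y + lam * v y) j x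
        = pdW (closure Ω) u₀ j x + lam * pdW (closure Ω) v j x := fun lam x hx j =>
    pdW_add_smul hud hx (hu1.differentiableOn (by norm_num) x hx)
      (hv1.differentiableOn (by norm_num) x hx) lam j
  have hgrad : ∀ (lam : ℂ), ∀ x ∈ closure Ω,
      gradDotW (closure Ω) (fun y => u₀ y + lam * v y) (fun y => u₀ y + lam * v y) x
        = ∑ j : Fin n, (pdW (closure Ω) u₀ j x + lam * pdW (closure Ω) v j x)
            * (pdW (closure Ω) u₀ j x + lam * pdW (closure Ω) v j x) := by
    intro lam x hx
    unfold gradDotW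
    exact Finset.sum_congr rfl fun j _ => by rw [hpd lam x hx j]
  refine ⟨?_, ?_, ?_⟩
  · -- analyticity of the PDE part
    intro x hx lam₀
    have hfun : (fun lam : ℂ =>
        -lapW (closure Ω) (fun y => u₀ y + lam * v y) x +
          q x * gradDotW (closure Ω) (fun y => u₀ y + lam * v y)
            (fun y => u₀ y + lam * v y) x +
          V x (u₀ x + lam * v x))
        = fun lam : ℂ =>
          -(lapW (closure Ω) u₀ x + lam * lapW (closure Ω) v x) +
            q x * (∑ j : Fin n, (pdW (closure Ω) u₀ j x + lam * pdW (closure Ω) v j x)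
              * (pdW (closure Ω) u₀ j x + lam * pdW (closure Ω) v j x)) +
            V x (u₀ x + lam * v x) := by
      funext lam
      rw [hlap lam x hx, hgrad lam x hx]
    rw [hfun]
    have haff : ∀ c d : ℂ, AnalyticAt ℂ (fun lam : ℂ => c + lam * d) lam₀ := fun c d =>
      analyticAt_const.add (analyticAt_id.mul analyticAt_const)
    apply AnalyticAt.add
    apply AnalyticAt.add
    · exact (haff _ _).neg
    · exact analyticAt_const.mul (Finset.analyticAt_fun_sum _ fun j _ =>
        (haff _ _).mul (haff _ _))
    · show AnalyticAt ℂ ((V x) ∘ fun lam : ℂ => u₀ x + lam * v x) lam₀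
      exact AnalyticAt.comp (g := V x) (f := fun lam : ℂ => u₀ x + lam * v x)
        (hVan x hx (u₀ x + lam₀ * v x)) (haff (u₀ x) (v x))
  · -- analyticity of the boundary part
    intro x hx lam₀
    exact (analyticAt_const.add (analyticAt_id.mul analyticAt_const)).sub
      (analyticAt_const.add (analyticAt_id.mul analyticAt_const))
  · -- bounds
    intro R hR
    choose Cu hCu using fun j k : Fin n => exists_hbnd_pdW2 hud hK hu₀ j k
    choose Cv hCv using fun j k : Fin n => exists_hbnd_pdW2 hud hK hv j k
    have hpexists : ∀ j : Fin n, ∃ C, HBnd α (closure Ω) C (pdW (closure Ω) u₀ j) := by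
      intro j
      obtain ⟨L, _, hL⟩ := holder_global hΩo hΩbd hΩsm hα0 hα1 _ (contDiffOn_pdW hud hu2 j)
      exact exists_hbnd hK (continuousOn_pdW hud hu1 j) hL
    choose Cp hCp using hpexists
    have hrexists : ∀ j : Fin n, ∃ C, HBnd α (closure Ω) C (pdW (closure Ω) v j) := by
      intro j
      obtain ⟨L, _, hL⟩ := holder_global hΩo hΩbd hΩsm hα0 hα1 _ (contDiffOn_pdW hud hv2 j)
      exact exists_hbnd hK (continuousOn_pdW hud hv1 j) hL
    choose Cr hCr using hrexists
    have hCu0e : ∃ C, HBnd α (closure Ω) C u₀ := by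
      obtain ⟨L, _, hL⟩ := holder_global hΩo hΩbd hΩsm hα0 hα1 u₀ hu1
      exact exists_hbnd hK hu1.continuousOn hL
    obtain ⟨Cu0, hCu0⟩ := hCu0e
    have hCv0e : ∃ C, HBnd α (closure Ω) C v := by
      obtain ⟨L, _, hL⟩ := holder_global hΩo hΩbd hΩsm hα0 hα1 v hv1
      exact exists_hbnd hK hv1.continuousOn hL
    obtain ⟨Cv0, hCv0⟩ := hCv0e
    obtain ⟨Lq, hLq⟩ := hq.2
    obtain ⟨Cq, hCq⟩ := exists_hbnd hK hq.1 hLq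
    -- V bounds
    have hCw0 : 0 ≤ Cu0 + R * Cv0 := add_nonneg hCu0.1 (mul_nonneg hR.le hCv0.1)
    obtain ⟨M0, hM0⟩ := hVbdd (Cu0 + R * Cv0 + 1) (by linarith)
    have hM0nn : 0 ≤ M0 := le_trans (cαNorm_nonneg α _ _) (hM0 0 (by simp; linarith))
    have hVptw : ∀ z : ℂ, ‖z‖ ≤ Cu0 + R * Cv0 + 1 → ∀ y ∈ closure Ω, ‖V y z‖ ≤ M0 := by
      intro z hz y hy
      have h1 : ‖V y z‖ ≤ supNorm (closure Ω) (fun x => V x z) :=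
        norm_le_supNorm hK (hVmem z).1 hy
      have h2 : supNorm (closure Ω) (fun x => V x z) ≤ cαNorm α (closure Ω) (fun x => V x z) := by
        have := holderSemi_nonneg α (closure Ω) (fun x => V x z)
        unfold cαNorm; linarith
      linarith [hM0 z hz]
    have hVhold : ∀ z : ℂ, ‖z‖ ≤ Cu0 + R * Cv0 + 1 →
        ∀ x ∈ closure Ω, ∀ y ∈ closure Ω,
          ‖V x z - V y z‖ ≤ M0 * dist x y ^ α := by
      intro z hz x hx y hy
      obtain ⟨_, Lz, hLz⟩ := hVmem z
      have h1 := sub_le_holderSemi (f := fun x' => V x' z) hα0 hLz hx hy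
      have h2 : holderSemi α (closure Ω) (fun x' => V x' z) ≤ M0 := by
        have h3 := hM0 z hz
        have h4 := supNorm_nonneg (closure Ω) (fun x' => V x' z)
        unfold cαNorm at h3; linarith
      exact le_trans h1 (mul_le_mul_of_nonneg_right h2 (Real.rpow_nonneg dist_nonneg α))
    -- boundary extensions
    obtain ⟨F₀, hF₀, hF₀b⟩ := hf₀
    obtain ⟨G, hG, hGb⟩ := hg
    choose CF hCF using fun j k : Fin n => exists_hbnd_pdW2 hud hK hF₀ j k
    choose CG hCG using fun j k : Fin n => exists_hbnd_pdW2 hud hK hG j k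
    have hF2 : ContDiffOn ℝ 2 F₀ (closure Ω) := hF₀.1
    have hG2 : ContDiffOn ℝ 2 G (closure Ω) := hG.1
    have hCF0e : ∃ C, HBnd α (closure Ω) C F₀ := by
      obtain ⟨L, _, hL⟩ := holder_global hΩo hΩbd hΩsm hα0 hα1 F₀ (hF2.of_le (by norm_num))
      exact exists_hbnd hK hF2.continuousOn hL
    obtain ⟨CF0, hCF0⟩ := hCF0e
    have hCG0e : ∃ C, HBnd α (closure Ω) C G := by
      obtain ⟨L, _, hL⟩ := holder_global hΩo hΩbd hΩsm hα0 hα1 G (hG2.of_le (by norm_num))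
      exact exists_hbnd hK hG2.continuousOn hL
    obtain ⟨CG0, hCG0⟩ := hCG0e
    -- final constant
    refine ⟨max (2 * (((∑ j : Fin n, Cu j j) + R * (∑ j : Fin n, Cv j j)) +
        2 * Cq * (∑ j : Fin n, 2 * (Cp j + R * Cr j) * (Cp j + R * Cr j)) +
        (M0 + (M0 + M0 * (Cu0 + R * Cv0)))))
      ((∑ j : Fin n, ∑ k : Fin n, (Cu j k + R * Cv j k + (CF j k + R * CG j k))) +
        (Cu0 + R * Cv0 + (CF0 + R * CG0))), ?_⟩
    intro lam hlam
    have hlamn : ‖lam‖ ≤ R := by exact hlam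
    -- HBnd of the affine combination
    have hw : HBnd α (closure Ω) (Cu0 + R * Cv0) (fun x => u₀ x + lam * v x) :=
      hCu0.add (hCv0.const_mul hlamn)
    constructor
    · -- cαNorm bound
      have hlapu : HBnd α (closure Ω) (∑ j : Fin n, Cu j j) (lapW (closure Ω) u₀) :=
        (hbnd_sum Finset.univ _ _ (fun j _ => hCu j j)).congr (fun x _ => rfl)
      have hlapv : HBnd α (closure Ω) (∑ j : Fin n, Cv j j) (lapW (closure Ω) v) :=
        (hbnd_sum Finset.univ _ _ (fun j _ => hCv j j)).congr (fun x _ => rfl)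
      have hterm1 : HBnd α (closure Ω) ((∑ j : Fin n, Cu j j) + R * (∑ j : Fin n, Cv j j))
          (fun x => -(lapW (closure Ω) u₀ x + lam * lapW (closure Ω) v x)) :=
        (hlapu.add (hlapv.const_mul hlamn)).neg
      have hsumgrad : HBnd α (closure Ω)
          (∑ j : Fin n, 2 * (Cp j + R * Cr j) * (Cp j + R * Cr j))
          (fun x => ∑ j : Fin n, (pdW (closure Ω) u₀ j x + lam * pdW (closure Ω) v j x)
            * (pdW (closure Ω) u₀ j x + lam * pdW (closure Ω) v j x)) :=
        hbnd_sum Finset.univ _ _ (fun j _ =>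
          ((hCp j).add ((hCr j).const_mul hlamn)).mul ((hCp j).add ((hCr j).const_mul hlamn)))
      have hterm2 := hCq.mul hsumgrad
      have hVterm : HBnd α (closure Ω) (M0 + (M0 + M0 * (Cu0 + R * Cv0)))
          (fun x => V x (u₀ x + lam * v x)) := by
        have habs : ∀ x ∈ closure Ω, ‖u₀ x + lam * v x‖ ≤ Cu0 + R * Cv0 + 1 := by
          intro x hx
          have := hw.2.1 x hx
          linarith
        refine ⟨by nlinarith [mul_nonneg hM0nn hCw0], fun x hx => ?_, fun x hx y hy => ?_⟩
        · have h1 := hVptw _ (habs x hx) x hx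
          nlinarith [mul_nonneg hM0nn hCw0]
        · have key1 : ‖V x (u₀ x + lam * v x) - V y (u₀ x + lam * v x)‖ ≤ M0 * dist x y ^ α :=
            hVhold _ (habs x hx) x hx y hy
          have key2 : ‖V y (u₀ x + lam * v x) - V y (u₀ y + lam * v y)‖
              ≤ M0 * ((Cu0 + R * Cv0) * dist x y ^ α) := by
            have hlip := entire_lipschitz (hVan y hy) (fun z hz => hVptw z hz y hy)
              (u₀ x + lam * v x) (u₀ y + lam * v y)
              (by have := hw.2.1 x hx; linarith)
              (by have := hw.2.1 y hy; linarith)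
            refine le_trans hlip ?_
            exact mul_le_mul_of_nonneg_left (by
              have := hw.2.2 x hx y hy
              exact this) hM0nn
          calc ‖V x (u₀ x + lam * v x) - V y (u₀ y + lam * v y)‖
              ≤ ‖V x (u₀ x + lam * v x) - V y (u₀ x + lam * v x)‖
                + ‖V y (u₀ x + lam * v x) - V y (u₀ y + lam * v y)‖ := by
                rw [show V x (u₀ x + lam * v x) - V y (u₀ y + lam * v y)
                  = (V x (u₀ x + lam * v x) - V y (u₀ x + lam * v x))
                    + (V y (u₀ x + lam * v x) - V y (u₀ y + lam * v y)) from by ring]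
                exact norm_add_le _ _
            _ ≤ M0 * dist x y ^ α + M0 * ((Cu0 + R * Cv0) * dist x y ^ α) := add_le_add key1 key2
            _ ≤ (M0 + (M0 + M0 * (Cu0 + R * Cv0))) * dist x y ^ α := by
                have h5 := Real.rpow_nonneg (dist_nonneg (x := x) (y := y)) α
                nlinarith [mul_nonneg hM0nn h5]
      have hpde := (hterm1.add hterm2).add hVterm
      have hpde' : HBnd α (closure Ω)
          (((∑ j : Fin n, Cu j j) + R * (∑ j : Fin n, Cv j j)) +
            2 * Cq * (∑ j : Fin n, 2 * (Cp j + R * Cr j) * (Cp j + R * Cr j)) +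
            (M0 + (M0 + M0 * (Cu0 + R * Cv0))))
          (fun x => -lapW (closure Ω) (fun y => u₀ y + lam * v y) x +
            q x * gradDotW (closure Ω) (fun y => u₀ y + lam * v y)
              (fun y => u₀ y + lam * v y) x +
            V x (u₀ x + lam * v x)) :=
        hpde.congr (fun x hx => by rw [hlap lam x hx, hgrad lam x hx])
      exact le_trans (hpde'.cαNorm_le hα0) (le_max_left _ _)
    · -- boundary norm bound
      have hA2 : ContDiffOn ℝ 2 (fun y => u₀ y + lam * v y) (closure Ω) :=
        hu2.add (contDiffOn_const.mul hv2)
      have hB2 : ContDiffOn ℝ 2 (fun y => F₀ y + lam * G y) (closure Ω) :=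
        hF2.add (contDiffOn_const.mul hG2)
      have hFlam2 : ContDiffOn ℝ 2
          (fun x => (u₀ x + lam * v x) - (F₀ x + lam * G x)) (closure Ω) := hA2.sub hB2
      have hd2 : ∀ j k : Fin n, ∀ x ∈ closure Ω,
          pdW (closure Ω) (pdW (closure Ω)
              (fun y => (u₀ y + lam * v y) - (F₀ y + lam * G y)) j) k x
            = (pdW (closure Ω) (pdW (closure Ω) u₀ j) k x
                + lam * pdW (closure Ω) (pdW (closure Ω) v j) k x)
              - (pdW (closure Ω) (pdW (closure Ω) F₀ j) k x
                + lam * pdW (closure Ω) (pdW (closure Ω) G j) k x) := by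
        intro j k x hx
        rw [pdW2_sub hud hA2 hB2 j k hx, pdW2_add_smul hud hu2 hv2 lam j k hx,
          pdW2_add_smul hud hF2 hG2 lam j k hx]
      have hbd2 : ∀ j k : Fin n, HBnd α (closure Ω)
          (Cu j k + R * Cv j k + (CF j k + R * CG j k))
          (pdW (closure Ω) (pdW (closure Ω)
            (fun y => (u₀ y + lam * v y) - (F₀ y + lam * G y)) j) k) := by
        intro j k
        have h0 := (((hCu j k).add ((hCv j k).const_mul hlamn)).add
          ((((hCF j k).add ((hCG j k).const_mul hlamn))).neg))
        refine h0.congr (fun x hx => ?_)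
        rw [hd2 j k x hx]
        ring
      have hsum2 : ∀ j k : Fin n, Cu j k + R * Cv j k + (CF j k + R * CG j k)
          ≤ ∑ j' : Fin n, ∑ k' : Fin n, (Cu j' k' + R * Cv j' k' + (CF j' k' + R * CG j' k')) := by
        intro j k
        have hnn : ∀ j' k' : Fin n, 0 ≤ Cu j' k' + R * Cv j' k' + (CF j' k' + R * CG j' k') :=
          fun j' k' => (hbd2 j' k').1
        calc Cu j k + R * Cv j k + (CF j k + R * CG j k)
            ≤ ∑ k' : Fin n, (Cu j k' + R * Cv j k' + (CF j k' + R * CG j k')) :=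
              Finset.single_le_sum (fun k' _ => hnn j k') (Finset.mem_univ k)
          _ ≤ ∑ j' : Fin n, ∑ k' : Fin n, (Cu j' k' + R * Cv j' k' + (CF j' k' + R * CG j' k')) :=
              Finset.single_le_sum (f := fun j' => ∑ k' : Fin n,
                (Cu j' k' + R * Cv j' k' + (CF j' k' + R * CG j' k')))
                (fun j' _ => Finset.sum_nonneg fun k' _ => hnn j' k') (Finset.mem_univ j)
      have hmem2 : MemC2Holder α (closure Ω)
          (fun x => (u₀ x + lam * v x) - (F₀ x + lam * G x)) := by
        refine ⟨hFlam2, ∑ j' : Fin n, ∑ k' : Fin n,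
          (Cu j' k' + R * Cv j' k' + (CF j' k' + R * CG j' k')), fun j k x hx y hy => ?_⟩
        exact ((hbd2 j k).mono (hsum2 j k)).2.2 x hx y hy
      have hFlamsup : HBnd α (closure Ω) (Cu0 + R * Cv0 + (CF0 + R * CG0))
          (fun x => (u₀ x + lam * v x) - (F₀ x + lam * G x)) := by
        have h0 := (hCu0.add (hCv0.const_mul hlamn)).add
          ((hCF0.add (hCG0.const_mul hlamn)).neg)
        exact h0.congr (fun x _ => by ring)
      have hc2 : c2αNorm α (closure Ω) (fun x => (u₀ x + lam * v x) - (F₀ x + lam * G x))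
          ≤ (∑ j' : Fin n, ∑ k' : Fin n, (Cu j' k' + R * Cv j' k' + (CF j' k' + R * CG j' k')))
            + (Cu0 + R * Cv0 + (CF0 + R * CG0)) := by
        unfold c2αNorm
        apply add_le_add
        · apply Finset.sum_le_sum
          intro j _
          apply Finset.sum_le_sum
          intro k _
          exact holderSemi_le hα0 (hbd2 j k).1 (hbd2 j k).2.2
        · exact supNorm_le hFlamsup.1 hFlamsup.2.1
      have hsinf : c2αBdryNorm α Ω (fun x => (u₀ x + lam * v x) - (f₀ x + lam * g x))
          ≤ c2αNorm α (closure Ω) (fun x => (u₀ x + lam * v x) - (F₀ x + lam * G x)) := by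
        apply csInf_le
        · refine ⟨0, ?_⟩
          rintro c ⟨F, hF, hFb, rfl⟩
          exact c2αNorm_nonneg α (closure Ω) F
        · exact ⟨fun x => (u₀ x + lam * v x) - (F₀ x + lam * G x), hmem2,
            fun x hx => by
              show (u₀ x + lam * v x) - (F₀ x + lam * G x)
                = (u₀ x + lam * v x) - (f₀ x + lam * g x)
              rw [hF₀b x hx, hGb x hx], rfl⟩
      exact le_trans hsinf (le_trans hc2 (le_max_right _ _))
end
end
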